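/- arXiv:1006.3925 — 6 statements merged into one kernel-verified Lean document; each statement's English description precedes it below -/
import Mathlib

section
/- Given σ>0, for every final point X₁=(x₁,y₁,θ₁,0) with |(x₁,y₁)| ≥ 8√(π/σ), there exist λ₀ ∈ [0,√(3π/σ)], λ₁ ∈ [0,√(5π/σ)] and T ≥ 2λ₀+2λ₁ such that the trajectory of the system x'=cos θ, y'=sin θ, θ'=κ, κ'=u starting at X₀=(0,0,π/2,0), with piecewise constant control u equal to −σ on [0,λ₀], +σ on (λ₀,2λ₀], 0 on (2λ₀,T−2λ₁], +σ on (T−2λ₁,T−λ₁], and −σ on (T−λ₁,T], reaches X₁ at time T (the angle θ₁ attained modulo 2π). -/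
open MeasureTheory Real Set

noncomputable section

/-- The piecewise-constant reference control of Proposition `trajec`:
`-σ` on `[0,l₀]`, `+σ` on `(l₀,2l₀]`, `0` on `(2l₀,T-2l₁]`, `+σ` on
`(T-2l₁,T-l₁]`, `-σ` on `(T-l₁,T]`. -/
def refCtrl (σ l₀ l₁ T t : ℝ) : ℝ :=
  if t ≤ l₀ then -σ
  else if t ≤ 2*l₀ then σ
  else if t ≤ T - 2*l₁ then 0
  else if t ≤ T - l₁ then σ
  else -σ

namespace RefAux

/-- ramp function -/
def rmp (c t : ℝ) : ℝ := max (t - c) 0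

lemma rmp_cont (c : ℝ) : Continuous (rmp c) :=
  (continuous_id.sub continuous_const).max continuous_const

lemma rmp_of_le {c t : ℝ} (h : t ≤ c) : rmp c t = 0 := by
  simp [rmp, sub_nonpos.mpr h]

lemma rmp_of_ge {c t : ℝ} (h : c ≤ t) : rmp c t = t - c := by
  simp [rmp, sub_nonneg.mpr h]

lemma rmp_abs_le (c t : ℝ) : |rmp c t| ≤ |t - c| := by
  rcases le_or_gt t c with h' | h'
  · simp [rmp_of_le h', abs_nonneg]
  · rw [rmp_of_ge h'.le]

lemma rmpsq_hasDerivAt (c x : ℝ) :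
    HasDerivAt (fun t => rmp c t ^ 2) (2 * rmp c x) x := by
  rcases lt_trichotomy x c with h | h | h
  · have he : (fun t => rmp c t ^ 2) =ᶠ[nhds x] fun _ => 0 := by
      filter_upwards [Iio_mem_nhds h] with t ht
      simp [rmp_of_le (le_of_lt ht)]
    rw [rmp_of_le h.le, mul_zero]
    exact HasDerivAt.congr_of_eventuallyEq (hasDerivAt_const x (0:ℝ)) he
  · subst h
    rw [rmp_of_le le_rfl, mul_zero]
    rw [hasDerivAt_iff_isLittleO]
    rw [Asymptotics.isLittleO_iff]
    intro ε hε
    filter_upwards [Metric.ball_mem_nhds x hε] with t ht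
    have h1 : |rmp x t| ≤ |t - x| := rmp_abs_le x t
    have h2 : |t - x| < ε := by simpa [Real.dist_eq] using ht
    have h3 : rmp x x = 0 := rmp_of_le le_rfl
    simp only [h3, Real.norm_eq_abs, smul_zero, sub_zero, ne_eq, OfNat.ofNat_ne_zero,
      not_false_eq_true, zero_pow]
    calc |rmp x t ^ 2| = |rmp x t| * |rmp x t| := by rw [sq, abs_mul]
      _ ≤ ε * |t - x| := by
          apply mul_le_mul (h1.trans h2.le) h1 (abs_nonneg _) hε.le
  · have he : (fun t => rmp c t ^ 2) =ᶠ[nhds x] fun t => (t - c) ^ 2 := by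
      filter_upwards [Ioi_mem_nhds h] with t ht
      simp [rmp_of_ge (le_of_lt ht)]
    rw [rmp_of_ge h.le]
    have h2 : HasDerivAt (fun t : ℝ => (t - c) ^ 2) (2 * (x - c)) x := by
      simpa using (((hasDerivAt_id x).sub_const c).fun_pow 2)
    exact h2.congr_of_eventuallyEq he

lemma rmp_hasDerivWithinAt (c x : ℝ) :
    HasDerivWithinAt (rmp c) (if c ≤ x then 1 else 0) (Ioi x) x := by
  rcases le_or_gt c x with h | h
  · rw [if_pos h]
    have h2 : HasDerivWithinAt (fun t : ℝ => t - c) 1 (Ioi x) x :=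
      ((hasDerivAt_id x).sub_const c).hasDerivWithinAt
    exact h2.congr (fun t ht => rmp_of_ge (h.trans (le_of_lt ht)))
      (rmp_of_ge h)
  · rw [if_neg (not_le.mpr h)]
    have h2 : HasDerivWithinAt (fun _ : ℝ => (0:ℝ)) 0 (Ioi x) x :=
      hasDerivWithinAt_const x _ 0
    apply h2.congr_of_eventuallyEq ?_ (rmp_of_le h.le)
    filter_upwards [mem_nhdsWithin_of_mem_nhds (Iio_mem_nhds h)] with t ht
    exact rmp_of_le (le_of_lt ht)

/-- model phase of an arc: `σt²/2` then `σl² - σ(2l-t)²/2` -/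
def ph (σ l t : ℝ) : ℝ := if t ≤ l then σ*t^2/2 else σ*l^2 - σ*(2*l-t)^2/2

lemma ph_cont (σ : ℝ) : Continuous (fun p : ℝ × ℝ => ph σ p.1 p.2) := by
  unfold ph
  apply Continuous.if_le
  · fun_prop
  · fun_prop
  · exact continuous_snd
  · exact continuous_fst
  · intro p hp; rw [hp]; ring

lemma ph_cont_t (σ l : ℝ) : Continuous (fun t => ph σ l t) :=
  (ph_cont σ).comp (by fun_prop : Continuous (fun t : ℝ => ((l:ℝ), t)))

/-- complex arc integral -/
def Z (σ l : ℝ) : ℂ := ∫ t in (0:ℝ)..(2*l), Complex.exp (ph σ l t * Complex.I)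

lemma Z_cont (σ : ℝ) : Continuous (fun l => Z σ l) := by
  unfold Z
  apply intervalIntegral.continuous_parametric_intervalIntegral_of_continuous
    (μ := volume) (f := fun l t => Complex.exp (ph σ l t * Complex.I))
  · apply Continuous.cexp
    exact ((Complex.continuous_ofReal.comp (ph_cont σ)).mul continuous_const)
  · fun_prop

lemma Z_norm_le (σ : ℝ) {l : ℝ} (hl : 0 ≤ l) : ‖Z σ l‖ ≤ 2 * l := by
  have := intervalIntegral.norm_integral_le_of_norm_le_const
    (C := 1) (f := fun t => Complex.exp (ph σ l t * Complex.I))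
    (a := (0:ℝ)) (b := 2*l) ?_
  · simpa [Z, abs_of_nonneg (by linarith : (0:ℝ) ≤ 2*l)] using this
  · intro t _
    simp [Complex.norm_exp_ofReal_mul_I]

lemma Z_re (σ l : ℝ) : (Z σ l).re = ∫ t in (0:ℝ)..(2*l), Real.cos (ph σ l t) := by
  unfold Z
  have hint : IntervalIntegrable (fun t => Complex.exp (ph σ l t * Complex.I)) volume 0 (2*l) := by
    apply Continuous.intervalIntegrable
    exact Continuous.cexp ((Complex.continuous_ofReal.comp (ph_cont_t σ l)).mul continuous_const)
  rw [show ∀ z : ℂ, z.re = Complex.reCLM z from fun _ => rfl]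
  rw [← ContinuousLinearMap.intervalIntegral_comp_comm _ hint]
  congr 1
  ext t
  simp [Complex.exp_ofReal_mul_I_re]

lemma Z_im (σ l : ℝ) : (Z σ l).im = ∫ t in (0:ℝ)..(2*l), Real.sin (ph σ l t) := by
  unfold Z
  have hint : IntervalIntegrable (fun t => Complex.exp (ph σ l t * Complex.I)) volume 0 (2*l) := by
    apply Continuous.intervalIntegrable
    exact Continuous.cexp ((Complex.continuous_ofReal.comp (ph_cont_t σ l)).mul continuous_const)
  rw [show ∀ z : ℂ, z.im = Complex.imCLM z from fun _ => rfl]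
  rw [← ContinuousLinearMap.intervalIntegral_comp_comm _ hint]
  congr 1
  ext t
  simp [Complex.exp_ofReal_mul_I_im]

lemma traj_eval (σ l₀ l₁ L T : ℝ) (hσ : 0 < σ) (h0 : 0 ≤ l₀) (h1 : 0 ≤ l₁)
    (hL : 0 ≤ L) (hT : T = 2*l₀ + 2*l₁ + L) :
    (fun t => ∫ s in (0:ℝ)..t, refCtrl σ l₀ l₁ T s) T = 0 ∧
    (fun t => π/2 + ∫ s in (0:ℝ)..t,
        (fun r => ∫ s in (0:ℝ)..r, refCtrl σ l₀ l₁ T s) s) T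
      = π/2 + σ*(l₁^2 - l₀^2) ∧
    (∫ t in (0:ℝ)..T, Real.cos ((fun t => π/2 + ∫ s in (0:ℝ)..t,
        (fun r => ∫ s in (0:ℝ)..r, refCtrl σ l₀ l₁ T s) s) t)) =
      (Z σ l₀).im + L * Real.cos (π/2 - σ*l₀^2)
        + (Real.cos (π/2 - σ*l₀^2) * (Z σ l₁).re - Real.sin (π/2 - σ*l₀^2) * (Z σ l₁).im) ∧
    (∫ t in (0:ℝ)..T, Real.sin ((fun t => π/2 + ∫ s in (0:ℝ)..t,
        (fun r => ∫ s in (0:ℝ)..r, refCtrl σ l₀ l₁ T s) s) t)) =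
      (Z σ l₀).re + L * Real.sin (π/2 - σ*l₀^2)
        + (Real.sin (π/2 - σ*l₀^2) * (Z σ l₁).re + Real.cos (π/2 - σ*l₀^2) * (Z σ l₁).im) := by
  set κf : ℝ → ℝ := fun t => ∫ s in (0:ℝ)..t, refCtrl σ l₀ l₁ T s with hκf
  set θf : ℝ → ℝ := fun t => π/2 + ∫ s in (0:ℝ)..t, κf s with hθf
  set θc : ℝ := π/2 - σ*l₀^2 with hθc
  -- breakpoint ordering
  have hb2 : (2:ℝ)*l₀ ≤ T - 2*l₁ := by rw [hT]; linarith
  have hb3 : T - 2*l₁ ≤ T - l₁ := by linarith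
  have hb4 : T - l₁ ≤ T := by linarith
  have h0T : (0:ℝ) ≤ T := by rw [hT]; linarith
  have h02 : (0:ℝ) ≤ 2*l₀ := by linarith
  -- the modified (right-continuous) control
  set v : ℝ → ℝ := fun s =>
    if s < l₀ then -σ else if s < 2*l₀ then σ
    else if s < T - 2*l₁ then 0 else if s < T - l₁ then σ else -σ with hv
  -- the explicit κ and θ
  set Kf : ℝ → ℝ := fun t => -σ * rmp 0 t + 2*σ * rmp l₀ t + -σ * rmp (2*l₀) t
      + σ * rmp (T-2*l₁) t + -(2*σ) * rmp (T-l₁) t with hKf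
  set Θf : ℝ → ℝ := fun t => π/2 + -(σ/2) * rmp 0 t ^ 2 + σ * rmp l₀ t ^ 2
      + -(σ/2) * rmp (2*l₀) t ^ 2 + σ/2 * rmp (T-2*l₁) t ^ 2 + -σ * rmp (T-l₁) t ^ 2 with hΘf
  have hKcont : Continuous Kf := by
    apply Continuous.add
    apply Continuous.add
    apply Continuous.add
    apply Continuous.add
    all_goals exact (continuous_const.mul (rmp_cont _))
  have hΘcont : Continuous Θf := by
    apply Continuous.add
    apply Continuous.add
    apply Continuous.add
    apply Continuous.add
    apply Continuous.add
    · exact continuous_const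
    all_goals exact (continuous_const.mul ((rmp_cont _).pow 2))
  -- u = v a.e.
  have hae : (fun s => refCtrl σ l₀ l₁ T s) =ᵐ[volume] v := by
    have hnull : volume ({l₀, 2*l₀, T - 2*l₁, T - l₁} : Set ℝ) = 0 :=
      (Set.toFinite _).measure_zero volume
    refine MeasureTheory.ae_iff.mpr (measure_mono_null ?_ hnull)
    intro s hs
    simp only [mem_setOf_eq] at hs
    by_contra hmem
    simp only [mem_insert_iff, mem_singleton_iff, not_or] at hmem
    obtain ⟨n1, n2, n3, n4⟩ := hmem
    apply hs
    simp only [refCtrl, hv]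
    have e1 : s ≤ l₀ ↔ s < l₀ := ⟨fun h => lt_of_le_of_ne h n1, le_of_lt⟩
    have e2 : s ≤ 2*l₀ ↔ s < 2*l₀ := ⟨fun h => lt_of_le_of_ne h n2, le_of_lt⟩
    have e3 : s ≤ T - 2*l₁ ↔ s < T - 2*l₁ := ⟨fun h => lt_of_le_of_ne h n3, le_of_lt⟩
    have e4 : s ≤ T - l₁ ↔ s < T - l₁ := ⟨fun h => lt_of_le_of_ne h n4, le_of_lt⟩
    simp only [e1, e2, e3, e4]
  -- v is interval integrable
  have hvint : ∀ a b : ℝ, IntervalIntegrable v volume a b := by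
    intro a b
    have hm : Measurable v := by
      apply Measurable.ite measurableSet_Iio measurable_const
      apply Measurable.ite measurableSet_Iio measurable_const
      apply Measurable.ite measurableSet_Iio measurable_const
      exact Measurable.ite measurableSet_Iio measurable_const measurable_const
    apply (_root_.intervalIntegrable_const (c := σ) (μ := volume) (a := a) (b := b)).mono_fun
      hm.aestronglyMeasurable
    apply Filter.Eventually.of_forall
    intro s
    simp only [hv, Real.norm_eq_abs, abs_of_pos hσ]
    split_ifs <;> simp [abs_of_pos hσ, abs_le, hσ.le] <;> linarith
  -- right derivative of Kf is v on (0,T)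
  have hder : ∀ x ∈ Ioo (0:ℝ) T, HasDerivWithinAt Kf (v x) (Ioi x) x := by
    intro x hx
    have H : HasDerivWithinAt Kf
        (-σ * (if (0:ℝ) ≤ x then 1 else 0) + 2*σ * (if l₀ ≤ x then 1 else 0)
          + -σ * (if 2*l₀ ≤ x then 1 else 0) + σ * (if T - 2*l₁ ≤ x then 1 else 0)
          + -(2*σ) * (if T - l₁ ≤ x then 1 else 0)) (Ioi x) x := by
      exact (((((rmp_hasDerivWithinAt 0 x).const_mul (-σ)).add
        ((rmp_hasDerivWithinAt l₀ x).const_mul (2*σ))).add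
        ((rmp_hasDerivWithinAt (2*l₀) x).const_mul (-σ))).add
        ((rmp_hasDerivWithinAt (T-2*l₁) x).const_mul σ)).add
        ((rmp_hasDerivWithinAt (T-l₁) x).const_mul (-(2*σ)))
    convert H using 1
    have hx0 : (0:ℝ) ≤ x := hx.1.le
    simp only [hv]
    rcases lt_or_ge x l₀ with h1 | h1
    · rw [if_pos h1, if_pos hx0, if_neg (by linarith), if_neg (by linarith),
        if_neg (by linarith), if_neg (by linarith)]
      ring
    · rcases lt_or_ge x (2*l₀) with h2 | h2
      · rw [if_neg (not_lt.mpr h1), if_pos h2, if_pos hx0, if_pos h1,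
          if_neg (by linarith), if_neg (by linarith), if_neg (by linarith)]
        ring
      · rcases lt_or_ge x (T - 2*l₁) with h3 | h3
        · rw [if_neg (not_lt.mpr h1), if_neg (not_lt.mpr h2), if_pos h3, if_pos hx0,
            if_pos h1, if_pos h2, if_neg (by linarith), if_neg (by linarith)]
          ring
        · rcases lt_or_ge x (T - l₁) with h4 | h4
          · rw [if_neg (not_lt.mpr h1), if_neg (not_lt.mpr h2), if_neg (not_lt.mpr h3),
              if_pos h4, if_pos hx0, if_pos h1, if_pos h2, if_pos h3, if_neg (by linarith)]
            ring
          · rw [if_neg (not_lt.mpr h1), if_neg (not_lt.mpr h2), if_neg (not_lt.mpr h3),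
              if_neg (not_lt.mpr h4), if_pos hx0, if_pos h1, if_pos h2, if_pos h3, if_pos h4]
            ring
  -- κ = Kf on [0,T]
  have hκ : ∀ t ∈ Icc (0:ℝ) T, κf t = Kf t := by
    intro t ht
    have h1 : κf t = ∫ s in (0:ℝ)..t, v s :=
      intervalIntegral.integral_congr_ae (hae.mono fun x hx _ => hx)
    have h2 : (∫ s in (0:ℝ)..t, v s) = Kf t - Kf 0 :=
      intervalIntegral.integral_eq_sub_of_hasDeriv_right_of_le ht.1
        hKcont.continuousOn
        (fun x hx => hder x ⟨hx.1, lt_of_lt_of_le hx.2 ht.2⟩) (hvint 0 t)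
    have h3 : Kf 0 = 0 := by
      simp only [hKf, rmp_of_le le_rfl, rmp_of_le h0, rmp_of_le h02,
        rmp_of_le (by linarith : (0:ℝ) ≤ T - 2*l₁), rmp_of_le (by linarith : (0:ℝ) ≤ T - l₁)]
      ring
    rw [h1, h2, h3, sub_zero]
  -- Θf has derivative Kf
  have hΘder : ∀ x : ℝ, HasDerivAt Θf (Kf x) x := by
    intro x
    have H : HasDerivAt Θf
        (-(σ/2) * (2 * rmp 0 x) + σ * (2 * rmp l₀ x) + -(σ/2) * (2 * rmp (2*l₀) x)
          + σ/2 * (2 * rmp (T-2*l₁) x) + -σ * (2 * rmp (T-l₁) x)) x := by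
      have h5 := ((((((hasDerivAt_const x (π/2)).add
        ((rmpsq_hasDerivAt 0 x).const_mul (-(σ/2)))).add
        ((rmpsq_hasDerivAt l₀ x).const_mul σ)).add
        ((rmpsq_hasDerivAt (2*l₀) x).const_mul (-(σ/2)))).add
        ((rmpsq_hasDerivAt (T-2*l₁) x).const_mul (σ/2))).add
        ((rmpsq_hasDerivAt (T-l₁) x).const_mul (-σ)))
      exact h5.congr_deriv (by ring)
    convert H using 1
    simp only [hKf]; ring
  -- θ = Θf on [0,T]
  have hθ : ∀ t ∈ Icc (0:ℝ) T, θf t = Θf t := by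
    intro t ht
    have h1 : (∫ s in (0:ℝ)..t, κf s) = ∫ s in (0:ℝ)..t, Kf s := by
      apply intervalIntegral.integral_congr
      intro s hs
      rw [uIcc_of_le ht.1] at hs
      exact hκ s ⟨hs.1, hs.2.trans ht.2⟩
    have h2 : (∫ s in (0:ℝ)..t, Kf s) = Θf t - Θf 0 :=
      intervalIntegral.integral_eq_sub_of_hasDerivAt (fun x _ => hΘder x)
        (hKcont.intervalIntegrable 0 t)
    have h3 : Θf 0 = π/2 := by
      simp only [hΘf, rmp_of_le le_rfl, rmp_of_le h0, rmp_of_le h02,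
        rmp_of_le (by linarith : (0:ℝ) ≤ T - 2*l₁), rmp_of_le (by linarith : (0:ℝ) ≤ T - l₁)]
      ring
    show π/2 + ∫ s in (0:ℝ)..t, κf s = Θf t
    rw [h1, h2, h3]; ring
  -- piecewise formulas for Θf
  have hΘ1 : ∀ t ∈ Icc (0:ℝ) (2*l₀), Θf t = π/2 - ph σ l₀ t := by
    intro t ht
    have h5 : rmp (2*l₀) t = 0 := rmp_of_le ht.2
    have h6 : rmp (T-2*l₁) t = 0 := rmp_of_le (ht.2.trans hb2)
    have h7 : rmp (T-l₁) t = 0 := rmp_of_le (ht.2.trans (hb2.trans hb3))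
    have h8 : rmp 0 t = t := by rw [rmp_of_ge ht.1]; ring
    simp only [hΘf, ph, h5, h6, h7, h8]
    rcases le_or_gt t l₀ with h9 | h9
    · rw [rmp_of_le h9, if_pos h9]; ring
    · rw [rmp_of_ge h9.le, if_neg (not_le.mpr h9)]; ring
  have hΘ2 : ∀ t ∈ Icc (2*l₀) (T - 2*l₁), Θf t = θc := by
    intro t ht
    have h4 : rmp 0 t = t := by rw [rmp_of_ge (h02.trans ht.1)]; ring
    have h5 : rmp l₀ t = t - l₀ := rmp_of_ge (by linarith [ht.1])
    have h6 : rmp (2*l₀) t = t - 2*l₀ := rmp_of_ge ht.1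
    have h7 : rmp (T-2*l₁) t = 0 := rmp_of_le ht.2
    have h8 : rmp (T-l₁) t = 0 := rmp_of_le (ht.2.trans hb3)
    simp only [hΘf, hθc, h4, h5, h6, h7, h8]
    ring
  have hΘ3 : ∀ x ∈ Icc (0:ℝ) (2*l₁), Θf (x + (T - 2*l₁)) = θc + ph σ l₁ x := by
    intro x hx
    have hTl : (0:ℝ) ≤ T - 2*l₁ := by linarith
    have h4 : rmp 0 (x + (T - 2*l₁)) = x + (T - 2*l₁) := by
      rw [rmp_of_ge (by linarith [hx.1])]; ring
    have h5 : rmp l₀ (x + (T - 2*l₁)) = x + (T - 2*l₁) - l₀ :=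
      rmp_of_ge (by linarith [hx.1])
    have h6 : rmp (2*l₀) (x + (T - 2*l₁)) = x + (T - 2*l₁) - 2*l₀ :=
      rmp_of_ge (by linarith [hx.1])
    have h7 : rmp (T-2*l₁) (x + (T - 2*l₁)) = x := by
      rw [rmp_of_ge (by linarith [hx.1])]; ring
    have h8 : rmp (T-l₁) (x + (T - 2*l₁)) = rmp l₁ x := by
      rcases le_or_gt x l₁ with h9 | h9
      · rw [rmp_of_le (by linarith), rmp_of_le h9]
      · rw [rmp_of_ge (by linarith), rmp_of_ge h9.le]; ring
    simp only [hΘf, hθc, h4, h5, h6, h7, h8, ph]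
    rcases le_or_gt x l₁ with h9 | h9
    · rw [rmp_of_le h9, if_pos h9]; ring
    · rw [rmp_of_ge h9.le, if_neg (not_le.mpr h9)]; ring
  -- value of κ at T
  have hκT : κf T = 0 := by
    rw [hκ T ⟨h0T, le_rfl⟩]
    simp only [hKf, rmp_of_ge (by linarith : (0:ℝ) ≤ T), rmp_of_ge (by linarith : l₀ ≤ T),
      rmp_of_ge (by linarith : 2*l₀ ≤ T), rmp_of_ge (by linarith : T - 2*l₁ ≤ T),
      rmp_of_ge hb4]
    rw [hT]; ring
  -- value of θ at T
  have hθT : θf T = π/2 + σ*(l₁^2 - l₀^2) := by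
    rw [hθ T ⟨h0T, le_rfl⟩]
    simp only [hΘf, rmp_of_ge (by linarith : (0:ℝ) ≤ T), rmp_of_ge (by linarith : l₀ ≤ T),
      rmp_of_ge (by linarith : 2*l₀ ≤ T), rmp_of_ge (hb3.trans hb4), rmp_of_ge hb4]
    rw [hT]; ring
  -- integrability of cos/sin of Θf on any interval
  have hci : ∀ a b : ℝ, IntervalIntegrable (fun t => Real.cos (Θf t)) volume a b :=
    fun a b => (Real.continuous_cos.comp hΘcont).intervalIntegrable a b
  have hsi : ∀ a b : ℝ, IntervalIntegrable (fun t => Real.sin (Θf t)) volume a b :=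
    fun a b => (Real.continuous_sin.comp hΘcont).intervalIntegrable a b
  -- replace θf by Θf inside the endpoint integrals
  have hrc : (∫ t in (0:ℝ)..T, Real.cos (θf t)) = ∫ t in (0:ℝ)..T, Real.cos (Θf t) := by
    apply intervalIntegral.integral_congr
    intro t ht
    rw [uIcc_of_le h0T] at ht
    show Real.cos (θf t) = Real.cos (Θf t)
    rw [hθ t ht]
  have hrs : (∫ t in (0:ℝ)..T, Real.sin (θf t)) = ∫ t in (0:ℝ)..T, Real.sin (Θf t) := by
    apply intervalIntegral.integral_congr
    intro t ht
    rw [uIcc_of_le h0T] at ht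
    show Real.sin (θf t) = Real.sin (Θf t)
    rw [hθ t ht]
  -- splitting of the interval
  have hsplitc : (∫ t in (0:ℝ)..T, Real.cos (Θf t)) =
      (∫ t in (0:ℝ)..(2*l₀), Real.cos (Θf t))
      + (∫ t in (2*l₀)..(T-2*l₁), Real.cos (Θf t))
      + (∫ t in (T-2*l₁)..T, Real.cos (Θf t)) := by
    rw [intervalIntegral.integral_add_adjacent_intervals (hci 0 (2*l₀)) (hci (2*l₀) (T-2*l₁)),
      intervalIntegral.integral_add_adjacent_intervals (hci 0 (T-2*l₁)) (hci (T-2*l₁) T)]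
  have hsplits : (∫ t in (0:ℝ)..T, Real.sin (Θf t)) =
      (∫ t in (0:ℝ)..(2*l₀), Real.sin (Θf t))
      + (∫ t in (2*l₀)..(T-2*l₁), Real.sin (Θf t))
      + (∫ t in (T-2*l₁)..T, Real.sin (Θf t)) := by
    rw [intervalIntegral.integral_add_adjacent_intervals (hsi 0 (2*l₀)) (hsi (2*l₀) (T-2*l₁)),
      intervalIntegral.integral_add_adjacent_intervals (hsi 0 (T-2*l₁)) (hsi (T-2*l₁) T)]
  -- piece 1
  have hp1c : (∫ t in (0:ℝ)..(2*l₀), Real.cos (Θf t)) = (Z σ l₀).im := by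
    rw [Z_im]
    apply intervalIntegral.integral_congr
    intro t ht
    rw [uIcc_of_le h02] at ht
    show Real.cos (Θf t) = Real.sin (ph σ l₀ t)
    rw [hΘ1 t ht, Real.cos_pi_div_two_sub]
  have hp1s : (∫ t in (0:ℝ)..(2*l₀), Real.sin (Θf t)) = (Z σ l₀).re := by
    rw [Z_re]
    apply intervalIntegral.integral_congr
    intro t ht
    rw [uIcc_of_le h02] at ht
    show Real.sin (Θf t) = Real.cos (ph σ l₀ t)
    rw [hΘ1 t ht, Real.sin_pi_div_two_sub]
  -- piece 2
  have hp2c : (∫ t in (2*l₀)..(T-2*l₁), Real.cos (Θf t)) = L * Real.cos θc := by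
    rw [intervalIntegral.integral_congr (g := fun _ => Real.cos θc)
      (fun t ht => by rw [uIcc_of_le hb2] at ht; show Real.cos (Θf t) = Real.cos θc; rw [hΘ2 t ht])]
    rw [intervalIntegral.integral_const, smul_eq_mul]
    congr 1
    rw [hT]; ring
  have hp2s : (∫ t in (2*l₀)..(T-2*l₁), Real.sin (Θf t)) = L * Real.sin θc := by
    rw [intervalIntegral.integral_congr (g := fun _ => Real.sin θc)
      (fun t ht => by rw [uIcc_of_le hb2] at ht; show Real.sin (Θf t) = Real.sin θc; rw [hΘ2 t ht])]
    rw [intervalIntegral.integral_const, smul_eq_mul]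
    congr 1
    rw [hT]; ring
  -- piece 3, change of variables
  have h2l₁ : (0:ℝ) ≤ 2*l₁ := by linarith
  have hcvc : (∫ t in (T-2*l₁)..T, Real.cos (Θf t))
      = ∫ x in (0:ℝ)..(2*l₁), Real.cos (Θf (x + (T - 2*l₁))) := by
    rw [intervalIntegral.integral_comp_add_right (fun t => Real.cos (Θf t)) (T - 2*l₁)]
    norm_num
  have hcvs : (∫ t in (T-2*l₁)..T, Real.sin (Θf t))
      = ∫ x in (0:ℝ)..(2*l₁), Real.sin (Θf (x + (T - 2*l₁))) := by
    rw [intervalIntegral.integral_comp_add_right (fun t => Real.sin (Θf t)) (T - 2*l₁)]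
    norm_num
  have hphci : IntervalIntegrable (fun x => Real.cos (ph σ l₁ x)) volume 0 (2*l₁) :=
    (Real.continuous_cos.comp (ph_cont_t σ l₁)).intervalIntegrable 0 (2*l₁)
  have hphsi : IntervalIntegrable (fun x => Real.sin (ph σ l₁ x)) volume 0 (2*l₁) :=
    (Real.continuous_sin.comp (ph_cont_t σ l₁)).intervalIntegrable 0 (2*l₁)
  have hp3c : (∫ t in (T-2*l₁)..T, Real.cos (Θf t))
      = Real.cos θc * (Z σ l₁).re - Real.sin θc * (Z σ l₁).im := by
    rw [hcvc]
    rw [intervalIntegral.integral_congr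
      (g := fun x => Real.cos θc * Real.cos (ph σ l₁ x) - Real.sin θc * Real.sin (ph σ l₁ x))
      (fun x hx => by
        rw [uIcc_of_le h2l₁] at hx
        show Real.cos (Θf (x + (T - 2*l₁))) = _
        rw [hΘ3 x hx, Real.cos_add])]
    rw [intervalIntegral.integral_sub (hphci.const_mul _) (hphsi.const_mul _),
      intervalIntegral.integral_const_mul, intervalIntegral.integral_const_mul, Z_re, Z_im]
  have hp3s : (∫ t in (T-2*l₁)..T, Real.sin (Θf t))
      = Real.sin θc * (Z σ l₁).re + Real.cos θc * (Z σ l₁).im := by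
    rw [hcvs]
    rw [intervalIntegral.integral_congr
      (g := fun x => Real.sin θc * Real.cos (ph σ l₁ x) + Real.cos θc * Real.sin (ph σ l₁ x))
      (fun x hx => by
        rw [uIcc_of_le h2l₁] at hx
        show Real.sin (Θf (x + (T - 2*l₁))) = _
        rw [hΘ3 x hx, Real.sin_add])]
    rw [intervalIntegral.integral_add (hphci.const_mul _) (hphsi.const_mul _),
      intervalIntegral.integral_const_mul, intervalIntegral.integral_const_mul, Z_re, Z_im]
  refine ⟨hκT, hθT, ?_, ?_⟩
  · show (∫ t in (0:ℝ)..T, Real.cos (θf t)) = _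
    rw [hrc, hsplitc, hp1c, hp2c, hp3c, hθc]
  · show (∫ t in (0:ℝ)..T, Real.sin (θf t)) = _
    rw [hrs, hsplits, hp1s, hp2s, hp3s, hθc]

end RefAux

open RefAux

lemma cs_aux (x₁ y₁ r u w A : ℝ) (hr : 0 < r) (hr2 : x₁^2 + y₁^2 = r^2)
    (hu2 : u^2 + w^2 = A^2) (hAnn : 0 ≤ A) (habs : A < r) :
    0 < x₁*(x₁ - u) + y₁*(y₁ - w) := by
  have hCS : x₁ * u + y₁ * w ≤ r * A := by
    have h2 : (x₁*u + y₁*w)^2 ≤ (x₁^2+y₁^2) * (u^2+w^2) := by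
      nlinarith [sq_nonneg (x₁*w - y₁*u)]
    rw [hu2, hr2] at h2
    rcases le_or_gt (x₁*u + y₁*w) 0 with hle | hgt
    · have : 0 ≤ r * A := mul_nonneg hr.le hAnn
      linarith
    · by_contra hcon
      push_neg at hcon
      have hB : 0 ≤ r * A := mul_nonneg hr.le hAnn
      have h5 : 0 < x₁*u + y₁*w - r*A := by linarith
      have h6 : 0 < x₁*u + y₁*w + r*A := by linarith
      nlinarith [mul_pos h5 h6]
  have h8 : r * A < r * r := mul_lt_mul_of_pos_left habs hr
  nlinarith [hCS]

set_option maxHeartbeats 2000000 in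
/-- for `|(x₁,y₁)| ≥ 8√(π/σ)` there are `l₀ ∈ [0,√(3π/σ)]`,
`l₁ ∈ [0,√(5π/σ)]`, `T ≥ 2l₀+2l₁` such that the trajectory of
`x'=cos θ, y'=sin θ, θ'=κ, κ'=u` starting at `X₀=(0,0,π/2,0)` with the
reference control reaches `X₁=(x₁,y₁,θ₁,0)` at time `T`
(angle attained modulo `2π`). -/
theorem reference_trajectory_reaches_target
    (σ : ℝ) (hσ : 0 < σ) (x₁ y₁ θ₁ : ℝ)
    (hfar : 8 * Real.sqrt (π / σ) ≤ Real.sqrt (x₁^2 + y₁^2)) :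
    ∃ (l₀ l₁ T : ℝ),
      l₀ ∈ Set.Icc 0 (Real.sqrt (3*π/σ)) ∧
      l₁ ∈ Set.Icc 0 (Real.sqrt (5*π/σ)) ∧
      2*l₀ + 2*l₁ ≤ T ∧
      (let u : ℝ → ℝ := refCtrl σ l₀ l₁ T
       let κ : ℝ → ℝ := fun t => ∫ s in (0:ℝ)..t, u s
       let θ : ℝ → ℝ := fun t => π/2 + ∫ s in (0:ℝ)..t, κ s
       (∫ t in (0:ℝ)..T, Real.cos (θ t)) = x₁ ∧
       (∫ t in (0:ℝ)..T, Real.sin (θ t)) = y₁ ∧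
       (∃ k : ℤ, θ T = θ₁ + 2*π*(k:ℝ)) ∧
       κ T = 0) := by
  have hπσ : 0 < π / σ := div_pos Real.pi_pos hσ
  set r : ℝ := Real.sqrt (x₁^2 + y₁^2) with hrdef
  have hr : 0 < r := lt_of_lt_of_le (by positivity) hfar
  have hr2 : x₁^2 + y₁^2 = r^2 := (Real.sq_sqrt (by positivity)).symm
  -- the angle correction c
  have h2π : (0:ℝ) < 2*π := by linarith [Real.pi_pos]
  set c : ℝ := θ₁ - π/2 - 2*π*(⌊(θ₁ - π/2)/(2*π)⌋ : ℤ) with hcdef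
  have hc0 : 0 ≤ c := by
    have h3 : ((⌊(θ₁ - π/2)/(2*π)⌋ : ℤ) : ℝ) ≤ (θ₁ - π/2)/(2*π) :=
      Int.floor_le _
    have h4 := (le_div_iff₀ h2π).mp h3
    rw [hcdef]; linarith
  have hc2 : c < 2*π := by
    have h3 : (θ₁ - π/2)/(2*π) < (⌊(θ₁ - π/2)/(2*π)⌋ : ℤ) + 1 :=
      Int.lt_floor_add_one _
    have h4 := (div_lt_iff₀ h2π).mp h3
    rw [hcdef]; nlinarith
  have hceq : θ₁ - π/2 = 2*π*(⌊(θ₁ - π/2)/(2*π)⌋ : ℤ) + c := by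
    rw [hcdef]; ring
  -- parameter-dependent arc lengths
  set L0 : ℝ → ℝ := fun a => Real.sqrt (a/σ) with hL0
  set L1 : ℝ → ℝ := fun a => Real.sqrt ((a+c)/σ) with hL1
  -- rotation by φ
  set rot : ℝ → ℂ := fun φ => (Real.cos φ : ℂ) + (Real.sin φ : ℂ) * Complex.I with hrot
  have hrotre : ∀ φ, (rot φ).re = Real.cos φ := by
    intro φ
    rw [hrot]
    simp only [Complex.add_re, Complex.mul_re, Complex.ofReal_re, Complex.ofReal_im,
      Complex.I_re, Complex.I_im]
    ring
  have hrotim : ∀ φ, (rot φ).im = Real.sin φ := by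
    intro φ
    rw [hrot]
    simp only [Complex.add_im, Complex.mul_im, Complex.ofReal_re, Complex.ofReal_im,
      Complex.I_re, Complex.I_im]
    ring
  have hrotabs : ∀ φ, ‖rot φ‖ = 1 := by
    intro φ
    rw [Complex.norm_def, Complex.normSq_apply, hrotre, hrotim]
    rw [show Real.cos φ * Real.cos φ + Real.sin φ * Real.sin φ = 1 by
      have := Real.sin_sq_add_cos_sq φ; nlinarith]
    exact Real.sqrt_one
  -- the displacement of the two arcs
  set Dc : ℝ → ℂ := fun a =>
    Complex.I * (starRingEnd ℂ) (Z σ (L0 a)) + rot (π/2 - a) * Z σ (L1 a) with hDc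
  set Dre : ℝ → ℝ := fun a => x₁ - (Dc a).re with hDre
  set Dim : ℝ → ℝ := fun a => y₁ - (Dc a).im with hDim
  set g : ℝ → ℝ := fun a =>
    Real.cos (π/2 - a) * Dim a - Real.sin (π/2 - a) * Dre a with hg
  -- continuity
  have hZL0cont : Continuous fun a => Z σ (L0 a) :=
    (Z_cont σ).comp (Real.continuous_sqrt.comp (continuous_id.div_const σ))
  have hZL1cont : Continuous fun a => Z σ (L1 a) :=
    (Z_cont σ).comp (Real.continuous_sqrt.comp
      ((continuous_id.add continuous_const).div_const σ))
  have hrotcont : Continuous fun a => rot (π/2 - a) := by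
    rw [hrot]
    apply Continuous.add
    · exact Complex.continuous_ofReal.comp (Real.continuous_cos.comp (by fun_prop))
    · exact (Complex.continuous_ofReal.comp (Real.continuous_sin.comp (by fun_prop))).mul
        continuous_const
  have hDccont : Continuous Dc := by
    rw [hDc]
    exact (continuous_const.mul (Complex.continuous_conj.comp hZL0cont)).add
      (hrotcont.mul hZL1cont)
  have hDrecont : Continuous Dre := by
    rw [hDre]; exact continuous_const.sub (Complex.continuous_re.comp hDccont)
  have hDimcont : Continuous Dim := by
    rw [hDim]; exact continuous_const.sub (Complex.continuous_im.comp hDccont)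
  have hgcont : Continuous g := by
    rw [hg]
    exact ((Real.continuous_cos.comp (by fun_prop)).mul hDimcont).sub
      ((Real.continuous_sin.comp (by fun_prop)).mul hDrecont)
  -- norm bound on Dc
  have hsqrtfac : ∀ u : ℝ, 0 ≤ u → Real.sqrt (u*π/σ) = Real.sqrt u * Real.sqrt (π/σ) := by
    intro u hu
    rw [show u*π/σ = u*(π/σ) by ring, Real.sqrt_mul hu]
  have hkey : 2*Real.sqrt (3*π/σ) + 2*Real.sqrt (5*π/σ) < 8*Real.sqrt (π/σ) := by
    rw [hsqrtfac 3 (by norm_num), hsqrtfac 5 (by norm_num)]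
    have hs : 0 < Real.sqrt (π/σ) := Real.sqrt_pos.mpr hπσ
    have h3 : Real.sqrt 3 ^ 2 = 3 := Real.sq_sqrt (by norm_num)
    have h5 : Real.sqrt 5 ^ 2 = 5 := Real.sq_sqrt (by norm_num)
    have h35 : Real.sqrt 3 + Real.sqrt 5 < 4 := by
      nlinarith [Real.sqrt_nonneg 3, Real.sqrt_nonneg 5, sq_nonneg (Real.sqrt 3 * Real.sqrt 5 - 4),
        sq_nonneg (Real.sqrt 3 - Real.sqrt 5)]
    nlinarith
  have hDcabs : ∀ a, 0 ≤ a → a ≤ 3*π → ‖Dc a‖ < r := by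
    intro a ha0 ha3
    have h1 : ‖Dc a‖ ≤ ‖Complex.I * (starRingEnd ℂ) (Z σ (L0 a))‖
        + ‖rot (π/2 - a) * Z σ (L1 a)‖ := by
      rw [hDc]; exact norm_add_le _ _
    have h2 : ‖Complex.I * (starRingEnd ℂ) (Z σ (L0 a))‖ = ‖Z σ (L0 a)‖ := by
      rw [norm_mul, Complex.norm_I, Complex.norm_conj, one_mul]
    have h3 : ‖rot (π/2 - a) * Z σ (L1 a)‖ = ‖Z σ (L1 a)‖ := by
      rw [norm_mul, hrotabs, one_mul]
    have h4 : ‖Z σ (L0 a)‖ ≤ 2 * L0 a := Z_norm_le σ (Real.sqrt_nonneg _)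
    have h5 : ‖Z σ (L1 a)‖ ≤ 2 * L1 a := Z_norm_le σ (Real.sqrt_nonneg _)
    have h6 : L0 a ≤ Real.sqrt (3*π/σ) := by
      apply Real.sqrt_le_sqrt
      exact (div_le_div_iff_of_pos_right hσ).mpr (by linarith)
    have h7 : L1 a ≤ Real.sqrt (5*π/σ) := by
      apply Real.sqrt_le_sqrt
      exact (div_le_div_iff_of_pos_right hσ).mpr (by linarith)
    calc ‖Dc a‖ ≤ ‖Z σ (L0 a)‖ + ‖Z σ (L1 a)‖ := by
          rw [h2, h3] at h1; exact h1
      _ ≤ 2*Real.sqrt (3*π/σ) + 2*Real.sqrt (5*π/σ) := by linarith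
      _ < 8*Real.sqrt (π/σ) := hkey
      _ ≤ r := hfar
  -- inner-product positivity
  have hpos : ∀ a, 0 ≤ a → a ≤ 3*π → 0 < x₁ * Dre a + y₁ * Dim a := by
    intro a ha0 ha3
    have habs := hDcabs a ha0 ha3
    have hu2 : (Dc a).re^2 + (Dc a).im^2 = (‖Dc a‖)^2 := by
      rw [Complex.sq_norm, Complex.normSq_apply]; ring
    have := cs_aux x₁ y₁ r (Dc a).re (Dc a).im (‖Dc a‖) hr hr2 hu2
      (norm_nonneg _) habs
    simp only [hDre, hDim]
    exact this
  -- the polar angle of the target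
  set z₁ : ℂ := (x₁ : ℂ) + (y₁ : ℂ) * Complex.I with hz₁
  have hz₁re : z₁.re = x₁ := by
    rw [hz₁]
    simp [Complex.add_re, Complex.mul_re]
  have hz₁im : z₁.im = y₁ := by
    rw [hz₁]
    simp [Complex.add_im, Complex.mul_im]
  have hz₁abs : ‖z₁‖ = r := by
    rw [Complex.norm_def, Complex.normSq_apply, hz₁re, hz₁im, hrdef]
    congr 1; ring
  have hz₁ne : z₁ ≠ 0 := by
    intro h
    rw [h] at hz₁abs
    simp at hz₁abs
    linarith
  set β : ℝ := Complex.arg z₁ with hβ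
  have hcosβ : Real.cos β = x₁ / r := by rw [hβ, Complex.cos_arg hz₁ne, hz₁abs, hz₁re]
  have hsinβ : Real.sin β = y₁ / r := by rw [hβ, Complex.sin_arg, hz₁abs, hz₁im]
  have hβ1 : -π < β := Complex.neg_pi_lt_arg z₁
  have hβ2 : β ≤ π := Complex.arg_le_pi z₁
  -- the left endpoint of the IVT interval
  set am : ℝ := if β ≤ 0 then -β else 2*π - β with ham
  have ham0 : 0 ≤ am := by
    rw [ham]; split_ifs with h
    · linarith
    · linarith
  have ham2 : am ≤ 2*π := by
    rw [ham]; split_ifs with h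
    · linarith [Real.pi_pos]
    · linarith
  have hCm : Real.cos (π/2 - am) = -(y₁/r) := by
    rw [ham]; split_ifs with h
    · rw [show π/2 - -β = π/2 + β by ring, Real.cos_add]
      simp [hsinβ]
    · rw [show π/2 - (2*π - β) = (π/2 + β) - 2*π by ring, Real.cos_sub_two_pi, Real.cos_add]
      simp [hsinβ]
  have hSm : Real.sin (π/2 - am) = x₁/r := by
    rw [ham]; split_ifs with h
    · rw [show π/2 - -β = π/2 + β by ring, Real.sin_add]
      simp [hcosβ]
    · rw [show π/2 - (2*π - β) = (π/2 + β) - 2*π by ring, Real.sin_sub_two_pi, Real.sin_add]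
      simp [hcosβ]
  have hgam : g am < 0 := by
    have := hpos am ham0 (by linarith [Real.pi_pos])
    rw [hg]
    simp only [hCm, hSm]
    rw [show -(y₁/r) * Dim am - x₁/r * Dre am = -((x₁ * Dre am + y₁ * Dim am)/r) by
      field_simp; ring]
    have : 0 < (x₁ * Dre am + y₁ * Dim am)/r := div_pos this hr
    linarith
  have hgap : 0 < g (am + π) := by
    have := hpos (am + π) (by linarith [Real.pi_pos]) (by linarith)
    rw [hg]
    simp only [show π/2 - (am + π) = (π/2 - am) - π by ring, Real.cos_sub_pi, Real.sin_sub_pi,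
      hCm, hSm]
    rw [show (- -(y₁/r)) * Dim (am+π) - (-(x₁/r)) * Dre (am+π)
      = (x₁ * Dre (am+π) + y₁ * Dim (am+π))/r by field_simp; ring]
    exact div_pos this hr
  -- IVT
  have hmem : (0:ℝ) ∈ Icc (g am) (g (am + π)) := ⟨hgam.le, hgap.le⟩
  have hivt := intermediate_value_Icc (by linarith [Real.pi_pos] : am ≤ am + π)
    hgcont.continuousOn hmem
  obtain ⟨a, hamem, hga0⟩ := hivt
  have ha0 : 0 ≤ a := le_trans ham0 hamem.1
  have ha3 : a ≤ 3*π := by linarith [hamem.2]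
  -- positivity of the cruise length
  set cφ : ℝ := Real.cos (π/2 - a) with hcφ
  set sφ : ℝ := Real.sin (π/2 - a) with hsφ
  set d1 : ℝ := Dre a with hd1
  set d2 : ℝ := Dim a with hd2
  set P : ℝ := cφ * d1 + sφ * d2 with hP
  have hg0 : cφ * d2 - sφ * d1 = 0 := by rw [hg] at hga0; exact hga0
  have hpyth : sφ^2 + cφ^2 = 1 := Real.sin_sq_add_cos_sq _
  have e1 : d1 = cφ * P := by rw [hP]; linear_combination (-sφ) * hg0 - d1 * hpyth
  have e2 : d2 = sφ * P := by rw [hP]; linear_combination cφ * hg0 - d2 * hpyth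
  have hcosnn : 0 ≤ Real.cos (π/2 - a - β) := by
    rw [ham] at hamem
    rcases le_or_gt β 0 with h | h
    · rw [if_pos h] at hamem
      apply Real.cos_nonneg_of_mem_Icc
      constructor
      · have := hamem.2; linarith
      · have := hamem.1; linarith
    · rw [if_neg (not_le.mpr h)] at hamem
      rw [show π/2 - a - β = (π/2 - a - β + 2*π) - 2*π by ring, Real.cos_sub_two_pi]
      apply Real.cos_nonneg_of_mem_Icc
      constructor
      · have := hamem.2; linarith
      · have := hamem.1; linarith
  have hPpos : 0 < P := by
    have hxy := hpos a ha0 ha3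
    have hx1 : x₁ = r * Real.cos β := by rw [hcosβ]; field_simp
    have hy1 : y₁ = r * Real.sin β := by rw [hsinβ]; field_simp
    have hcsub : Real.cos (π/2 - a - β) = cφ * Real.cos β + sφ * Real.sin β := by
      rw [hcφ, hsφ, show π/2 - a - β = (π/2 - a) - β by ring, Real.cos_sub]
    have hcomp : x₁ * d1 + y₁ * d2 = P * (r * Real.cos (π/2 - a - β)) := by
      rw [hx1, hy1, e1, e2, hcsub]; ring
    rw [← hd1, ← hd2] at hxy
    rw [hcomp] at hxy
    by_contra hle
    push_neg at hle
    have : P * (r * Real.cos (π/2 - a - β)) ≤ 0 :=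
      mul_nonpos_of_nonpos_of_nonneg hle (by positivity)
    linarith
  -- instantiate
  set l₀ : ℝ := L0 a with hl₀
  set l₁ : ℝ := L1 a with hl₁
  set T : ℝ := 2*l₀ + 2*l₁ + P with hT
  have hl₀0 : 0 ≤ l₀ := Real.sqrt_nonneg _
  have hl₁0 : 0 ≤ l₁ := Real.sqrt_nonneg _
  have hσl₀ : σ * l₀^2 = a := by
    rw [hl₀, hL0]
    rw [Real.sq_sqrt (by positivity)]
    field_simp
  have hσl₁ : σ * l₁^2 = a + c := by
    rw [hl₁, hL1]
    rw [Real.sq_sqrt (by positivity)]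
    field_simp
  obtain ⟨hκT, hθT, hxi, hyi⟩ := traj_eval σ l₀ l₁ P T hσ hl₀0 hl₁0 hPpos.le hT
  clear_value r c rot Dc Dre Dim g z₁ β am cφ sφ d1 d2 P l₀ l₁ T
  refine ⟨l₀, l₁, T, ⟨hl₀0, ?_⟩, ⟨hl₁0, ?_⟩, by rw [hT]; linarith, ?_, ?_, ?_, hκT⟩
  · simp only [hl₀, hL0]
    exact Real.sqrt_le_sqrt ((div_le_div_iff_of_pos_right hσ).mpr (by linarith))
  · simp only [hl₁, hL1]
    exact Real.sqrt_le_sqrt ((div_le_div_iff_of_pos_right hσ).mpr (by linarith))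
  · -- x coordinate
    rw [hxi]
    have hDcre : (Dc a).re = (Z σ l₀).im + (cφ * (Z σ l₁).re - sφ * (Z σ l₁).im) := by
      rw [hDc]
      simp only [Complex.add_re, Complex.mul_re, Complex.I_re, Complex.I_im,
        Complex.conj_re, Complex.conj_im, hrotre, hrotim]
      rw [hl₀, hl₁, hcφ, hsφ]
      ring
    rw [hσl₀, ← hcφ, ← hsφ]
    have : x₁ - (Z σ l₀).im - (cφ * (Z σ l₁).re - sφ * (Z σ l₁).im) = d1 := by
      simp only [hd1, hDre]; rw [hDcre]; ring
    have hd1' : d1 = cφ * P := e1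
    linarith [this, hd1']
  · -- y coordinate
    rw [hyi]
    have hDcim : (Dc a).im = (Z σ l₀).re + (sφ * (Z σ l₁).re + cφ * (Z σ l₁).im) := by
      rw [hDc]
      simp only [Complex.add_im, Complex.mul_im, Complex.I_re, Complex.I_im,
        Complex.conj_re, Complex.conj_im, hrotre, hrotim]
      rw [hl₀, hl₁, hcφ, hsφ]
      ring
    rw [hσl₀, ← hcφ, ← hsφ]
    have : y₁ - (Z σ l₀).re - (sφ * (Z σ l₁).re + cφ * (Z σ l₁).im) = d2 := by
      simp only [hd2, hDim]; rw [hDcim]; ring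
    linarith [this, e2]
  · -- angle
    refine ⟨-⌊(θ₁ - π/2)/(2*π)⌋, ?_⟩
    rw [hθT]
    have h1 : σ*(l₁^2 - l₀^2) = c := by
      linear_combination hσl₁ - hσl₀
    rw [h1]
    push_cast
    linarith [hceq]

end
end

section
/- Suppose ψ : ℝ → ℝ is nonnegative with ψ(r) ≥ C₀|r|^p for all |r| ≥ R₀, where p>1 and C₀,R₀>0, and let q satisfy 1/p+1/q=1. Let u be a measurable function on an interval [t₁,t₂] with ∫_{t₁}^{t₂} ψ(u(τ)) dτ ≤ Γ, and let κ(s) = κ(t₁) + ∫_{t₁}^{s} u(τ) dτ. Then for all s₁ ≤ s₂ in [t₁,t₂]: |κ(s₂)−κ(s₁)| ≤ (Γ/C₀)^{1/p} |s₂−s₁|^{1/q} + R₀|s₂−s₁|. -/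
open MeasureTheory Real Set

/-- Hölder-type uniform continuity estimate for
`κ(s) = κ(t₁) + ∫_{t₁}^s u`, given `∫ ψ(u) ≤ Γ` and the growth
hypothesis (H3) `ψ(r) ≥ C₀|r|^p` for `|r| ≥ R₀`. -/
theorem kappa_uniform_continuity
    (ψ : ℝ → ℝ) (p q C₀ R₀ Γ : ℝ)
    (hψnonneg : ∀ r, 0 ≤ ψ r)
    (hp : 1 < p) (hC₀ : 0 < C₀) (hR₀ : 0 < R₀)
    (hgrowth : ∀ r : ℝ, R₀ ≤ |r| → C₀ * |r| ^ p ≤ ψ r)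
    (hq : 1/p + 1/q = 1)
    (t₁ t₂ : ℝ) (ht : t₁ ≤ t₂)
    (u κ : ℝ → ℝ) (hu : Measurable u)
    (hint : IntegrableOn (fun τ => ψ (u τ)) (Set.Icc t₁ t₂))
    (hΓ : (∫ τ in t₁..t₂, ψ (u τ)) ≤ Γ)
    (hκ : ∀ s ∈ Set.Icc t₁ t₂, κ s = κ t₁ + ∫ τ in t₁..s, u τ) :
    ∀ s₁ s₂ : ℝ, t₁ ≤ s₁ → s₁ ≤ s₂ → s₂ ≤ t₂ →
      |κ s₂ - κ s₁| ≤ (Γ/C₀) ^ (1/p) * (s₂ - s₁) ^ (1/q) + R₀ * (s₂ - s₁) := by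
  intro s₁ s₂ hs₁ hle hs₂
  have hpq : p.HolderConjugate q := Real.holderConjugate_iff.mpr ⟨hp, by simpa [one_div] using hq⟩
  have hp0 : (0:ℝ) < p := lt_trans one_pos hp
  -- the truncated function
  set A : Set ℝ := {τ | R₀ ≤ |u τ|} with hA
  have hAmeas : MeasurableSet A := measurableSet_le measurable_const hu.abs
  set w : ℝ → ℝ := A.indicator (fun τ => |u τ|) with hw
  have hwmeas : Measurable w := (hu.abs).indicator hAmeas
  have hwnonneg : ∀ τ, 0 ≤ w τ := fun τ => Set.indicator_nonneg (fun x _ => abs_nonneg _) τ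
  -- pointwise estimates
  have hwp_le : ∀ τ, C₀ * w τ ^ p ≤ ψ (u τ) := by
    intro τ
    by_cases h : τ ∈ A
    · simp only [hw, Set.indicator_of_mem h]
      exact hgrowth _ h
    · simp only [hw, Set.indicator_of_notMem h]
      rw [Real.zero_rpow (ne_of_gt hp0), mul_zero]
      exact hψnonneg _
  have habs_le : ∀ τ, |u τ| ≤ w τ + R₀ := by
    intro τ
    by_cases h : τ ∈ A
    · simp only [hw, Set.indicator_of_mem h]
      linarith [hR₀.le]
    · simp only [hw, Set.indicator_of_notMem h, zero_add]
      exact le_of_lt (not_le.mp h)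
  have hw_le : ∀ τ, w τ ≤ w τ ^ p + 1 := by
    intro τ
    rcases le_or_gt 1 (w τ) with h | h
    · have : w τ ^ (1:ℝ) ≤ w τ ^ p := Real.rpow_le_rpow_of_exponent_le h hp.le
      rw [Real.rpow_one] at this
      nlinarith [Real.rpow_nonneg (hwnonneg τ) p]
    · nlinarith [Real.rpow_nonneg (hwnonneg τ) p]
  -- integrability on Ioc t₁ t₂
  have hψioc : IntegrableOn (fun τ => ψ (u τ)) (Set.Ioc t₁ t₂) :=
    hint.mono_set Set.Ioc_subset_Icc_self
  have hψdiv : IntegrableOn (fun τ => ψ (u τ) / C₀) (Set.Ioc t₁ t₂) := hψioc.div_const C₀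
  have hwp_int : IntegrableOn (fun τ => w τ ^ p) (Set.Ioc t₁ t₂) := by
    refine Integrable.mono' hψdiv ((by fun_prop : Measurable fun τ => w τ ^ p).aestronglyMeasurable) ?_
    refine Filter.Eventually.of_forall fun τ => ?_
    rw [Real.norm_eq_abs, abs_of_nonneg (Real.rpow_nonneg (hwnonneg τ) p)]
    rw [le_div_iff₀ hC₀]
    linarith [hwp_le τ]
  have hone_int : IntegrableOn (fun _ : ℝ => (1:ℝ)) (Set.Ioc t₁ t₂) :=
    integrableOn_const measure_Ioc_lt_top.ne
  have hR_int : IntegrableOn (fun _ : ℝ => R₀) (Set.Ioc t₁ t₂) :=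
    integrableOn_const measure_Ioc_lt_top.ne
  have hw_int : IntegrableOn w (Set.Ioc t₁ t₂) := by
    refine Integrable.mono' (hwp_int.add hone_int)
      hwmeas.aestronglyMeasurable ?_
    exact Filter.Eventually.of_forall fun τ => by
      rw [Real.norm_eq_abs, abs_of_nonneg (hwnonneg τ)]; exact hw_le τ
  have hu_int : IntegrableOn u (Set.Ioc t₁ t₂) := by
    refine Integrable.mono' (hw_int.add hR_int)
      hu.aestronglyMeasurable ?_
    exact Filter.Eventually.of_forall fun τ => by
      rw [Real.norm_eq_abs]; exact habs_le τ
  -- κ s₂ - κ s₁ = ∫ s₁..s₂ u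
  have hii : ∀ a b : ℝ, t₁ ≤ a → b ≤ t₂ → a ≤ b → IntervalIntegrable u volume a b := by
    intro a b ha hb hab
    rw [intervalIntegrable_iff_integrableOn_Ioc_of_le hab]
    exact hu_int.mono_set (Set.Ioc_subset_Ioc ha hb)
  have hκdiff : κ s₂ - κ s₁ = ∫ τ in s₁..s₂, u τ := by
    rw [hκ s₂ ⟨hs₁.trans hle, hs₂⟩, hκ s₁ ⟨hs₁, (hle.trans hs₂)⟩]
    have := intervalIntegral.integral_interval_sub_left
      (hii t₁ s₂ le_rfl hs₂ (hs₁.trans hle)) (hii t₁ s₁ le_rfl (hle.trans hs₂) hs₁)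
    simp only [add_sub_add_left_eq_sub]
    exact this
  -- reduce to set integral over Ioc s₁ s₂
  set μ : Measure ℝ := volume.restrict (Set.Ioc s₁ s₂) with hμ
  haveI : IsFiniteMeasure μ := by
    constructor
    rw [hμ, Measure.restrict_apply_univ]
    exact measure_Ioc_lt_top
  have hsub : Set.Ioc s₁ s₂ ⊆ Set.Ioc t₁ t₂ := Set.Ioc_subset_Ioc hs₁ hs₂
  have hμuniv : (μ Set.univ).toReal = s₂ - s₁ := by
    rw [hμ, Measure.restrict_apply_univ, Real.volume_Ioc, ENNReal.toReal_ofReal (by linarith)]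
  have hconst_int : Integrable (fun _ : ℝ => R₀) μ := integrable_const _
  have hw_intμ : Integrable w μ := hw_int.mono_set hsub
  have hwp_intμ : Integrable (fun τ => w τ ^ p) μ := hwp_int.mono_set hsub
  have step1 : |κ s₂ - κ s₁| ≤ (∫ τ, w τ ∂μ) + R₀ * (s₂ - s₁) := by
    rw [hκdiff]
    calc |∫ τ in s₁..s₂, u τ| ≤ ∫ τ in s₁..s₂, |u τ| :=
          intervalIntegral.abs_integral_le_integral_abs hle
      _ = ∫ τ, |u τ| ∂μ := by rw [intervalIntegral.integral_of_le hle]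
      _ ≤ ∫ τ, (w τ + R₀) ∂μ := by
          refine integral_mono ((hu_int.mono_set hsub).abs) (hw_intμ.add hconst_int) ?_
          exact habs_le
      _ = (∫ τ, w τ ∂μ) + R₀ * (s₂ - s₁) := by
          rw [integral_add hw_intμ hconst_int, integral_const, measureReal_def, hμuniv, smul_eq_mul, mul_comm]
  -- Hölder
  have hΓ0 : 0 ≤ Γ := by
    refine le_trans ?_ hΓ
    exact intervalIntegral.integral_nonneg ht (fun τ _ => hψnonneg _)
  have hwp_bound : ∫ τ, w τ ^ p ∂μ ≤ Γ / C₀ := by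
    rw [le_div_iff₀ hC₀, mul_comm, ← integral_const_mul]
    calc ∫ τ, C₀ * w τ ^ p ∂μ ≤ ∫ τ, ψ (u τ) ∂μ := by
          refine integral_mono (hwp_intμ.const_mul C₀) (hψioc.mono_set hsub) hwp_le
      _ ≤ ∫ τ in Set.Ioc t₁ t₂, ψ (u τ) := by
          refine setIntegral_mono_set hψioc ?_ (HasSubset.Subset.eventuallyLE hsub)
          exact Filter.Eventually.of_forall fun τ => hψnonneg _
      _ ≤ Γ := by rwa [intervalIntegral.integral_of_le ht] at hΓ
  have hwp_nonneg : 0 ≤ ∫ τ, w τ ^ p ∂μ :=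
    integral_nonneg fun τ => Real.rpow_nonneg (hwnonneg τ) p
  have hmemw : MemLp w (ENNReal.ofReal p) μ := by
    have hne0 : ENNReal.ofReal p ≠ 0 := by
      simp [ENNReal.ofReal_eq_zero, not_le, hp0]
    have := (memLp_norm_rpow_iff (μ := μ) (q := ENNReal.ofReal p) (p := ENNReal.ofReal p)
      hwmeas.aestronglyMeasurable hne0 ENNReal.ofReal_ne_top)
    rw [ENNReal.div_self hne0 ENNReal.ofReal_ne_top] at this
    rw [← this, memLp_one_iff_integrable]
    refine hwp_intμ.congr (Filter.Eventually.of_forall fun τ => ?_)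
    simp only [Real.norm_eq_abs, abs_of_nonneg (hwnonneg τ), ENNReal.toReal_ofReal hp0.le]
  have hmem1 : MemLp (fun _ : ℝ => (1:ℝ)) (ENNReal.ofReal q) μ := memLp_const _
  have holder : ∫ τ, w τ ∂μ ≤ (∫ τ, w τ ^ p ∂μ) ^ (1/p) * (s₂ - s₁) ^ (1/q) := by
    have h := integral_mul_le_Lp_mul_Lq_of_nonneg hpq
      (Filter.Eventually.of_forall hwnonneg) (Filter.Eventually.of_forall fun _ => zero_le_one)
      hmemw hmem1
    simp only [mul_one, Real.one_rpow] at h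
    rwa [integral_const, measureReal_def, hμuniv, smul_eq_mul, mul_one] at h
  have hq0 : 0 < q := hpq.symm.pos
  have final : (∫ τ, w τ ^ p ∂μ) ^ (1/p) * (s₂ - s₁) ^ (1/q) ≤
      (Γ/C₀) ^ (1/p) * (s₂ - s₁) ^ (1/q) := by
    refine mul_le_mul_of_nonneg_right ?_ (Real.rpow_nonneg (by linarith) _)
    exact Real.rpow_le_rpow hwp_nonneg hwp_bound (by positivity)
  linarith [step1, holder, final]
end

section
/- For every natural number m, setting λ_m = 4^{−m} and μ_m = 4^{−m(m+1)/2}, the following holds: for every t₁ < t₂ in ℝ, every C > 0 and every function f ∈ C^m([t₁,t₂]) satisfying |f^{(m)}(t)| > C for all t ∈ [t₁,t₂], there exists a subinterval of [t₁,t₂] of length λ_m (t₂−t₁) on which |f(t)| > μ_m C (t₂−t₁)^m. -/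
open Real Set

lemma tri_succ (m : ℕ) : (m+1)*(m+1+1)/2 = m*(m+1)/2 + (m+1) := by
  have h : (m+1)*(m+1+1) = m*(m+1) + (m+1)*2 := by ring
  rw [h, Nat.add_mul_div_right _ _ (by norm_num)]

/-- if `|f^(m)| > C` on `[t₁,t₂]` then there is a subinterval of
length `4^{-m}(t₂-t₁)` on which `|f| > 4^{-m(m+1)/2} C (t₂-t₁)^m`. -/
theorem lower_bound_on_subinterval (m : ℕ) :
    ∀ t₁ t₂ : ℝ, t₁ < t₂ → ∀ C : ℝ, 0 < C → ∀ f : ℝ → ℝ,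
      ContDiffOn ℝ m f (Set.Icc t₁ t₂) →
      (∀ t ∈ Set.Icc t₁ t₂, C < |iteratedDerivWithin m f (Set.Icc t₁ t₂) t|) →
      ∃ a : ℝ, t₁ ≤ a ∧ a + ((1:ℝ)/4)^m * (t₂ - t₁) ≤ t₂ ∧
        ∀ t ∈ Set.Icc a (a + ((1:ℝ)/4)^m * (t₂ - t₁)),
          ((1:ℝ)/4)^(m*(m+1)/2) * C * (t₂ - t₁)^m < |f t| := by
  induction m with
  | zero =>
    intro t₁ t₂ hlt C hC f _ hder
    refine ⟨t₁, le_refl _, by simp, ?_⟩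
    intro t ht
    simp only [pow_zero, one_mul] at ht ⊢
    have := hder t (by simpa using ht)
    simpa [iteratedDerivWithin_zero] using this
  | succ m IH =>
    intro t₁ t₂ hlt C hC f hf hder
    set s := Set.Icc t₁ t₂ with hs
    have hud : UniqueDiffOn ℝ s := uniqueDiffOn_Icc hlt
    set g := derivWithin f s with hgdef
    have hg : ContDiffOn ℝ m g s := by
      apply hf.derivWithin hud
      exact_mod_cast le_refl ((m:ℕ∞) + 1)
    have hgder : ∀ t ∈ s, C < |iteratedDerivWithin m g s t| := by
      intro t ht
      have := hder t ht
      rwa [iteratedDerivWithin_succ'] at this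
    obtain ⟨a, ha₁, ha₂, hga⟩ := IH t₁ t₂ hlt C hC g hg hgder
    set L : ℝ := ((1:ℝ)/4)^m * (t₂ - t₁) with hLdef
    set D : ℝ := ((1:ℝ)/4)^(m*(m+1)/2) * C * (t₂ - t₁)^m with hDdef
    have ht12 : (0:ℝ) < t₂ - t₁ := by linarith
    have hLpos : 0 < L := by positivity
    have hDpos : 0 < D := by positivity
    set L' : ℝ := ((1:ℝ)/4)^(m+1) * (t₂ - t₁) with hL'def
    have hL'pos : 0 < L' := by positivity
    have hL4 : L = 4 * L' := by rw [hLdef, hL'def, pow_succ]; ring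
    set D' : ℝ := ((1:ℝ)/4)^((m+1)*(m+1+1)/2) * C * (t₂ - t₁)^(m+1) with hD'def
    have hD'eq : D' = D * L' := by
      rw [hD'def, hDdef, hL'def, tri_succ, pow_add, pow_succ, pow_succ]; ring
    -- f is differentiable on s with derivative g
    have hfd : DifferentiableOn ℝ f s := by
      apply hf.differentiableOn
      simp
    have hsub : Set.Icc a (a + L) ⊆ s := by
      intro x hx
      exact ⟨le_trans ha₁ hx.1, le_trans hx.2 ha₂⟩
    -- Key: for a ≤ t0 < t1 ≤ a + L, D * (t1 - t0) < |f t1 - f t0|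
    have key : ∀ t0 t1 : ℝ, a ≤ t0 → t0 < t1 → t1 ≤ a + L →
        D * (t1 - t0) < |f t1 - f t0| := by
      intro t0 t1 h0 h01 h1
      have hIoo : Set.Ioo t0 t1 ⊆ Set.Ioo t₁ t₂ := by
        intro x hx
        constructor
        · exact lt_of_le_of_lt (le_trans ha₁ h0) hx.1
        · exact lt_of_lt_of_le hx.2 (le_trans h1 ha₂)
      have hderiv : ∀ x ∈ Set.Ioo t0 t1, HasDerivAt f (g x) x := by
        intro x hx
        have hx' : x ∈ Set.Ioo t₁ t₂ := hIoo hx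
        have hmem : s ∈ nhds x := Icc_mem_nhds hx'.1 hx'.2
        exact ((hfd x (Set.Ioo_subset_Icc_self hx')).hasDerivWithinAt).hasDerivAt hmem
      have hcont : ContinuousOn f (Set.Icc t0 t1) := by
        apply (hfd.continuousOn).mono
        intro x hx
        exact ⟨le_trans ha₁ (le_trans h0 hx.1), le_trans hx.2 (le_trans h1 ha₂)⟩
      obtain ⟨c, hc, hceq⟩ := exists_hasDerivAt_eq_slope f g h01 hcont hderiv
      have hcmem : c ∈ Set.Icc a (a + L) :=
        ⟨le_trans h0 (le_of_lt hc.1), le_trans (le_of_lt hc.2) h1⟩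
      have hgc : D < |g c| := hga c hcmem
      have : |f t1 - f t0| = |g c| * (t1 - t0) := by
        rw [hceq, abs_div, abs_of_pos (by linarith : (0:ℝ) < t1 - t0)]
        exact (div_mul_cancel₀ _ (by linarith : t1 - t0 ≠ 0)).symm
      rw [this]
      exact (mul_lt_mul_of_pos_right hgc (by linarith)).trans_le (le_refl _)
    by_cases h1 : ∀ t ∈ Set.Icc a (a + L'), D' < |f t|
    · exact ⟨a, ha₁, by rw [hL4] at ha₂; linarith, h1⟩
    · push_neg at h1
      obtain ⟨t0, ht0, ht0le⟩ := h1
      refine ⟨a + 3 * L', by linarith [ht0.1, ht0.2], ?_, ?_⟩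
      · rw [hL4] at ha₂; linarith
      · intro t ht
        by_contra hcon
        push_neg at hcon
        have h01 : t0 < t := by
          have := ht0.2; have := ht.1; linarith
        have hkey := key t0 t (le_trans ht0.1 (le_refl _) |>.trans (le_refl _) |>.trans (le_refl _)) h01 (by rw [hL4]; linarith [ht.2])
        have habs : |f t - f t0| ≤ |f t| + |f t0| := abs_sub _ _
        have h2L : 2 * L' ≤ t - t0 := by
          have := ht0.2; have := ht.1; linarith
        have : 2 * D' ≤ D * (t - t0) := by
          rw [hD'eq]
          calc 2 * (D * L') = D * (2 * L') := by ring
          _ ≤ D * (t - t0) := mul_le_mul_of_nonneg_left h2L (le_of_lt hDpos)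
        linarith [abs_nonneg (f t), abs_nonneg (f t0)]
end

section
/- Every abnormal extremal of the problem is trivial; precisely: let θ, κ : [0,T] → ℝ be continuous with θ' = κ, let p₁, p₂ be real constants and p₃, p₄ : [0,T] → ℝ absolutely continuous functions satisfying p₃' = p₁ sin θ − p₂ cos θ and p₄' = −p₃ a.e., suppose that for almost every t the function v ↦ p₁ cos θ(t) + p₂ sin θ(t) + p₃(t)κ(t) + p₄(t)v attains a finite maximum over v ∈ ℝ equal to 0 (the PMP maximization and zero-Hamiltonian conditions with ν=0). Then p₁ = p₂ = 0 and p₃ ≡ p₄ ≡ 0 on [0,T]. -/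
open MeasureTheory Real Set

/-- A continuous function on `[0,T]` that vanishes a.e. vanishes everywhere. -/
lemma aux_zero_of_ae_zero {T : ℝ} (hT : 0 < T) {f : ℝ → ℝ}
    (hf : ContinuousOn f (Set.Icc 0 T))
    (h : ∀ᵐ t ∂(volume.restrict (Set.Icc (0:ℝ) T)), f t = 0) :
    ∀ t ∈ Set.Icc (0:ℝ) T, f t = 0 := by
  intro t ht
  by_contra hne
  have hc : Filter.Tendsto f (nhdsWithin t (Set.Icc 0 T)) (nhds (f t)) := hf t ht
  have hev : f ⁻¹' ({0}ᶜ) ∈ nhdsWithin t (Set.Icc 0 T) :=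
    hc (isOpen_compl_singleton.mem_nhds hne)
  rw [Metric.mem_nhdsWithin_iff] at hev
  obtain ⟨ε, hε, hsub⟩ := hev
  set a := max 0 (t - ε/2) with ha
  set b := min T (t + ε/2) with hb
  have hab : a < b := by
    rw [ha, hb]
    simp only [max_lt_iff, lt_min_iff]
    obtain ⟨h0, h1⟩ := ht
    exact ⟨⟨hT, by linarith⟩, ⟨by linarith, by linarith⟩⟩
  have hsubIcc : Set.Icc a b ⊆ Set.Icc 0 T := fun s hs =>
    ⟨le_trans (le_max_left _ _) hs.1, le_trans hs.2 (min_le_left _ _)⟩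
  have hsubball : Set.Icc a b ⊆ Metric.ball t ε := by
    intro s hs
    have h1 : t - ε/2 ≤ s := le_trans (le_max_right _ _) hs.1
    have h2 : s ≤ t + ε/2 := le_trans hs.2 (min_le_right _ _)
    rw [Metric.mem_ball, Real.dist_eq, abs_sub_lt_iff]
    constructor <;> linarith
  have hnull : volume ({t | ¬ f t = 0} ∩ Set.Icc (0:ℝ) T) = 0 := by
    rw [MeasureTheory.ae_iff, Measure.restrict_apply' measurableSet_Icc] at h
    exact h
  have hsub2 : Set.Icc a b ⊆ {t | ¬ f t = 0} ∩ Set.Icc (0:ℝ) T := by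
    intro s hs
    refine ⟨?_, hsubIcc hs⟩
    have : s ∈ f ⁻¹' ({0}ᶜ) := hsub ⟨hsubball hs, hsubIcc hs⟩
    simpa using this
  have hle := measure_mono (μ := volume) hsub2
  rw [hnull, Real.volume_Icc] at hle
  rw [le_zero_iff, ENNReal.ofReal_eq_zero] at hle
  linarith

/-- If `f` is continuous on `[0,T]` and its primitive from `0` vanishes,
then `f` vanishes on `[0,T]`. -/
lemma aux_zero_of_integral_zero {T : ℝ} (hT : 0 < T) {f : ℝ → ℝ}
    (hf : ContinuousOn f (Set.Icc 0 T))
    (h : ∀ t ∈ Set.Icc (0:ℝ) T, (∫ s in (0:ℝ)..t, f s) = 0) :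
    ∀ t ∈ Set.Icc (0:ℝ) T, f t = 0 := by
  intro t ht
  have hint : IntervalIntegrable f volume 0 t := by
    apply ContinuousOn.intervalIntegrable
    apply hf.mono
    rw [Set.uIcc_of_le ht.1]
    exact Set.Icc_subset_Icc le_rfl ht.2
  rcases lt_or_eq_of_le ht.2 with htT | htT
  · -- t < T : right derivative
    have hss : Set.Ioc t T ⊆ Set.Icc 0 T :=
      Set.Ioc_subset_Icc_self.trans (Set.Icc_subset_Icc ht.1 le_rfl)
    have hmemf : Set.Ioc t T ∈ nhdsWithin t (Set.Ioi t) := Ioc_mem_nhdsGT htT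
    have hmeas : StronglyMeasurableAtFilter f (nhdsWithin t (Set.Ioi t)) volume :=
      ⟨Set.Ioc t T, hmemf, (hf.mono hss).aestronglyMeasurable measurableSet_Ioc⟩
    have hcont : ContinuousWithinAt f (Set.Ioi t) t :=
      (hf t ht).mono_of_mem_nhdsWithin (Filter.mem_of_superset hmemf hss)
    have hD : HasDerivWithinAt (fun u => ∫ s in (0:ℝ)..u, f s) (f t) (Set.Ici t) t :=
      intervalIntegral.integral_hasDerivWithinAt_right hint hmeas hcont
    have hD' := hD.mono (Set.Icc_subset_Ici_self : Set.Icc t T ⊆ Set.Ici t)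
    have hD0 : HasDerivWithinAt (fun _ : ℝ => (0:ℝ)) (f t) (Set.Icc t T) t := by
      apply hD'.congr
      · intro y hy
        exact (h y ⟨le_trans ht.1 hy.1, hy.2⟩).symm
      · exact (h t ht).symm
    have hu : UniqueDiffWithinAt ℝ (Set.Icc t T) t :=
      uniqueDiffOn_Icc htT t (Set.left_mem_Icc.mpr (le_of_lt htT))
    have h1 := hD0.derivWithin hu
    have h2 := (hasDerivWithinAt_const t (Set.Icc t T) (0:ℝ)).derivWithin hu
    rw [h1] at h2
    exact h2
  · -- t = T : left derivative
    have ht0 : 0 < t := htT ▸ hT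
    have hss : Set.Icc 0 t ⊆ Set.Icc 0 T := Set.Icc_subset_Icc le_rfl ht.2
    have hmemf : Set.Icc 0 t ∈ nhdsWithin t (Set.Iic t) := Icc_mem_nhdsLE ht0
    have hmeas : StronglyMeasurableAtFilter f (nhdsWithin t (Set.Iic t)) volume :=
      ⟨Set.Icc 0 t, hmemf, (hf.mono hss).aestronglyMeasurable measurableSet_Icc⟩
    have hcont : ContinuousWithinAt f (Set.Iic t) t :=
      (hf t ht).mono_of_mem_nhdsWithin (Filter.mem_of_superset hmemf hss)
    have hD : HasDerivWithinAt (fun u => ∫ s in (0:ℝ)..u, f s) (f t) (Set.Iic t) t :=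
      intervalIntegral.integral_hasDerivWithinAt_right hint hmeas hcont
    have hD' := hD.mono (Set.Icc_subset_Iic_self : Set.Icc 0 t ⊆ Set.Iic t)
    have hD0 : HasDerivWithinAt (fun _ : ℝ => (0:ℝ)) (f t) (Set.Icc 0 t) t := by
      apply hD'.congr
      · intro y hy
        exact (h y ⟨hy.1, le_trans hy.2 ht.2⟩).symm
      · exact (h t ht).symm
    have hu : UniqueDiffWithinAt ℝ (Set.Icc 0 t) t :=
      uniqueDiffOn_Icc ht0 t (Set.right_mem_Icc.mpr (le_of_lt ht0))
    have h1 := hD0.derivWithin hu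
    have h2 := (hasDerivWithinAt_const t (Set.Icc 0 t) (0:ℝ)).derivWithin hu
    rw [h1] at h2
    exact h2
open MeasureTheory Real Set

/-- every abnormal extremal is trivial: if the abnormal
Hamiltonian `v ↦ p₁cos θ + p₂sin θ + p₃κ + p₄v` attains a finite maximum over
`v ∈ ℝ` equal to `0` a.e., then `p₁ = p₂ = 0` and `p₃ ≡ p₄ ≡ 0`. -/
theorem abnormal_extremals_are_trivial
    (T : ℝ) (hT : 0 < T)
    (θ κ p₃ p₄ : ℝ → ℝ) (p₁ p₂ : ℝ)
    (hθc : ContinuousOn θ (Set.Icc 0 T))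
    (hκc : ContinuousOn κ (Set.Icc 0 T))
    (hθ : ∀ t ∈ Set.Icc (0:ℝ) T, θ t = θ 0 + ∫ s in (0:ℝ)..t, κ s)
    (hp₃ : ∀ t ∈ Set.Icc (0:ℝ) T,
      p₃ t = p₃ 0 + ∫ s in (0:ℝ)..t, (p₁ * Real.sin (θ s) - p₂ * Real.cos (θ s)))
    (hp₄ : ∀ t ∈ Set.Icc (0:ℝ) T,
      p₄ t = p₄ 0 + ∫ s in (0:ℝ)..t, (-(p₃ s)))
    (hmax : ∀ᵐ t ∂(volume.restrict (Set.Icc (0:ℝ) T)),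
      (∀ v : ℝ, p₁ * Real.cos (θ t) + p₂ * Real.sin (θ t)
          + p₃ t * κ t + p₄ t * v ≤ 0) ∧
      (∃ v : ℝ, p₁ * Real.cos (θ t) + p₂ * Real.sin (θ t)
          + p₃ t * κ t + p₄ t * v = 0)) :
    p₁ = 0 ∧ p₂ = 0 ∧ ∀ t ∈ Set.Icc (0:ℝ) T, p₃ t = 0 ∧ p₄ t = 0 := by
  have h0mem : (0:ℝ) ∈ Set.Icc (0:ℝ) T := ⟨le_rfl, le_of_lt hT⟩
  have huIcc : Set.uIcc (0:ℝ) T = Set.Icc 0 T := Set.uIcc_of_le (le_of_lt hT)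
  -- continuity of the integrand for p₃
  have hg₁c : ContinuousOn (fun s => p₁ * Real.sin (θ s) - p₂ * Real.cos (θ s))
      (Set.Icc 0 T) := by
    exact ((continuousOn_const.mul (Real.continuous_sin.comp_continuousOn hθc)).sub
      (continuousOn_const.mul (Real.continuous_cos.comp_continuousOn hθc)))
  -- p₃ is continuous on [0,T]
  have hp₃c : ContinuousOn p₃ (Set.Icc 0 T) := by
    have hi : IntegrableOn (fun s => p₁ * Real.sin (θ s) - p₂ * Real.cos (θ s))
        (Set.uIcc (0:ℝ) T) volume := by
      rw [huIcc]; exact hg₁c.integrableOn_compact isCompact_Icc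
    have := ((continuousOn_const (c := p₃ 0)).add (intervalIntegral.continuousOn_primitive_interval hi))
    rw [huIcc] at this
    exact this.congr hp₃
  -- p₄ is continuous on [0,T]
  have hp₄c : ContinuousOn p₄ (Set.Icc 0 T) := by
    have hi : IntegrableOn (fun s => -(p₃ s)) (Set.uIcc (0:ℝ) T) volume := by
      rw [huIcc]; exact (hp₃c.neg).integrableOn_compact isCompact_Icc
    have := ((continuousOn_const (c := p₄ 0)).add (intervalIntegral.continuousOn_primitive_interval hi))
    rw [huIcc] at this
    exact this.congr hp₄
  -- a.e. p₄ = 0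
  have hp₄ae : ∀ᵐ t ∂(volume.restrict (Set.Icc (0:ℝ) T)), p₄ t = 0 := by
    filter_upwards [hmax] with t h
    obtain ⟨h1, _⟩ := h
    by_contra hne
    set c := p₁ * Real.cos (θ t) + p₂ * Real.sin (θ t) + p₃ t * κ t with hc
    have := h1 ((1 - c) / p₄ t)
    rw [mul_div_cancel₀ _ hne] at this
    linarith
  have hp₄0 : ∀ t ∈ Set.Icc (0:ℝ) T, p₄ t = 0 := aux_zero_of_ae_zero hT hp₄c hp₄ae
  -- p₃ = 0 on [0,T]
  have hp₃0 : ∀ t ∈ Set.Icc (0:ℝ) T, p₃ t = 0 := by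
    have hint0 : ∀ t ∈ Set.Icc (0:ℝ) T, (∫ s in (0:ℝ)..t, -(p₃ s)) = 0 := by
      intro t ht
      have := hp₄ t ht
      rw [hp₄0 t ht, hp₄0 0 h0mem] at this
      linarith
    intro t ht
    have := aux_zero_of_integral_zero hT hp₃c.neg hint0 t ht
    rw [Pi.neg_apply] at this
    linarith
  -- p₁ sin θ - p₂ cos θ = 0 on [0,T]
  have hsc : ∀ t ∈ Set.Icc (0:ℝ) T, p₁ * Real.sin (θ t) - p₂ * Real.cos (θ t) = 0 := by
    apply aux_zero_of_integral_zero hT hg₁c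
    intro t ht
    have := hp₃ t ht
    rw [hp₃0 t ht, hp₃0 0 h0mem] at this
    linarith
  -- p₁ cos θ + p₂ sin θ = 0 on [0,T]
  have hcsae : ∀ᵐ t ∂(volume.restrict (Set.Icc (0:ℝ) T)),
      p₁ * Real.cos (θ t) + p₂ * Real.sin (θ t) = 0 := by
    have hmem : ∀ᵐ t ∂(volume.restrict (Set.Icc (0:ℝ) T)), t ∈ Set.Icc (0:ℝ) T :=
      ae_restrict_mem measurableSet_Icc
    filter_upwards [hmax, hmem] with t h htm
    obtain ⟨_, v, hv⟩ := h
    rw [hp₃0 t htm, hp₄0 t htm] at hv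
    linarith
  have hcs : ∀ t ∈ Set.Icc (0:ℝ) T, p₁ * Real.cos (θ t) + p₂ * Real.sin (θ t) = 0 := by
    apply aux_zero_of_ae_zero hT _ hcsae
    exact (continuousOn_const.mul (Real.continuous_cos.comp_continuousOn hθc)).add
      (continuousOn_const.mul (Real.continuous_sin.comp_continuousOn hθc))
  have e1 := hcs 0 h0mem
  have e2 := hsc 0 h0mem
  have epyth := Real.sin_sq_add_cos_sq (θ 0)
  have hp₁ : p₁ = 0 := by linear_combination Real.cos (θ 0) * e1 + Real.sin (θ 0) * e2 - p₁ * epyth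
  have hp₂ : p₂ = 0 := by linear_combination Real.sin (θ 0) * e1 - Real.cos (θ 0) * e2 - p₂ * epyth
  exact ⟨hp₁, hp₂, fun t ht => ⟨hp₃0 t ht, hp₄0 t ht⟩⟩
end

section
/- Suppose ψ : ℝ → ℝ is C¹, strictly convex, even, with ψ(0)=0, and ψ(r) ≥ C₀|r|^p for |r| ≥ R₀ with p>1, C₀,R₀>0. Then the map η ↦ ψ'(η)η − ψ(η) is strictly increasing on [0,∞), strictly decreasing on (−∞,0], and tends to +∞ as |η| → ∞. Consequently, for every α ∈ [0,2π) with sin α < 1, the equation cos(π/2−α) + z·(ψ')^{−1}(z) − 1 − ψ((ψ')^{−1}(z)) = 0 has exactly one positive solution z and exactly one negative solution z. -/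
open Real Set Filter

/-- the map `η ↦ ψ'(η)η - ψ(η)` is strictly increasing on
`[0,∞)`, strictly decreasing on `(-∞,0]`, tends to `+∞` as `|η| → ∞`; hence
for `α ∈ [0,2π)` with `sin α < 1` the equation
`cos(π/2-α) + z(ψ')⁻¹(z) - 1 - ψ((ψ')⁻¹(z)) = 0` has exactly one positive and
exactly one negative solution. -/
theorem legendre_map_monotone_and_unique_roots
    (ψ : ℝ → ℝ) (p C₀ R₀ : ℝ)
    (hC1 : ContDiff ℝ 1 ψ)
    (hconv : StrictConvexOn ℝ Set.univ ψ)
    (heven : ∀ r, ψ (-r) = ψ r)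
    (h0 : ψ 0 = 0)
    (hp : 1 < p) (hC₀ : 0 < C₀) (hR₀ : 0 < R₀)
    (hgrowth : ∀ r : ℝ, R₀ ≤ |r| → C₀ * |r| ^ p ≤ ψ r) :
    StrictMonoOn (fun η : ℝ => deriv ψ η * η - ψ η) (Set.Ici 0) ∧
    StrictAntiOn (fun η : ℝ => deriv ψ η * η - ψ η) (Set.Iic 0) ∧
    Tendsto (fun η : ℝ => deriv ψ η * η - ψ η) atTop atTop ∧
    Tendsto (fun η : ℝ => deriv ψ η * η - ψ η) atBot atTop ∧
    (∀ α : ℝ, α ∈ Set.Ico 0 (2*π) → Real.sin α < 1 →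
      (∃! z : ℝ, 0 < z ∧
        Real.cos (π/2 - α) + z * Function.invFun (deriv ψ) z
          - 1 - ψ (Function.invFun (deriv ψ) z) = 0) ∧
      (∃! z : ℝ, z < 0 ∧
        Real.cos (π/2 - α) + z * Function.invFun (deriv ψ) z
          - 1 - ψ (Function.invFun (deriv ψ) z) = 0)) := by
  set F : ℝ → ℝ := fun η : ℝ => deriv ψ η * η - ψ η with hF
  have hdiff : Differentiable ℝ ψ := hC1.differentiable one_ne_zero
  have hdc : Continuous (deriv ψ) := hC1.continuous_deriv le_rfl
  -- strict monotonicity of the derivative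
  have hsm : StrictMono (deriv ψ) :=
    strictMonoOn_univ.1 (hconv.strictMonoOn_deriv fun x _ => hdiff x)
  -- oddness of the derivative
  have hodd : ∀ x : ℝ, deriv ψ (-x) = - deriv ψ x := by
    intro x
    have h1 : (fun x : ℝ => ψ (-x)) = ψ := funext heven
    have h2 : deriv (fun x : ℝ => ψ (-x)) x = -deriv ψ (-x) := deriv_comp_neg ψ x
    rw [h1] at h2
    linarith [h2]
  have hd0 : deriv ψ 0 = 0 := by have := hodd 0; simp at this; linarith
  -- strict tangent line inequality
  have htang : ∀ x y : ℝ, x ≠ y → ψ x + deriv ψ x * (y - x) < ψ y := by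
    intro x y hxy
    rcases lt_or_gt_of_ne hxy with h | h
    · have hh := hconv.deriv_lt_slope (mem_univ x) (mem_univ y) h (hdiff x)
      rw [slope_def_field] at hh
      have h' : 0 < y - x := by linarith
      have := (lt_div_iff₀ h').1 hh
      linarith
    · have hh := hconv.slope_lt_deriv (mem_univ y) (mem_univ x) h (hdiff x)
      rw [slope_def_field] at hh
      have h' : 0 < x - y := by linarith
      have := (div_lt_iff₀ h').1 hh
      linarith
  -- part 1 : strict monotone on Ici 0
  have hmono : StrictMonoOn F (Set.Ici 0) := by
    intro a ha b hb hab
    have ht := htang b a (ne_of_gt hab)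
    have hd := hsm hab
    simp only [hF]
    have ha' : (0:ℝ) ≤ a := ha
    nlinarith
  -- part 2 : strict anti on Iic 0
  have hanti : StrictAntiOn F (Set.Iic 0) := by
    intro a ha b hb hab
    have ht := htang a b (ne_of_lt hab)
    have hd := hsm hab
    have hb' : b ≤ (0:ℝ) := hb
    simp only [hF]
    nlinarith
  -- deriv ψ tends to atTop
  have hdtop : Tendsto (deriv ψ) atTop atTop := by
    have hbound : ∀ᶠ η in atTop, C₀ * η ^ (p - 1) ≤ deriv ψ η := by
      filter_upwards [eventually_ge_atTop (max R₀ 1)] with η hη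
      have hη1 : (1:ℝ) ≤ η := le_trans (le_max_right _ _) hη
      have hηR : R₀ ≤ η := le_trans (le_max_left _ _) hη
      have hηpos : (0:ℝ) < η := lt_of_lt_of_le one_pos hη1
      have hg := hgrowth η (by rwa [abs_of_pos hηpos])
      rw [abs_of_pos hηpos] at hg
      have hsl := hconv.slope_lt_deriv (mem_univ 0) (mem_univ η) hηpos (hdiff η)
      rw [slope_def_field, h0] at hsl
      have key : C₀ * η ^ (p - 1) ≤ (ψ η - 0) / (η - 0) := by
        rw [sub_zero, sub_zero, le_div_iff₀ hηpos]
        calc C₀ * η ^ (p - 1) * η = C₀ * (η ^ (p-1) * η ^ (1:ℝ)) := by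
              rw [Real.rpow_one]; ring
          _ = C₀ * η ^ p := by rw [← Real.rpow_add hηpos]; ring_nf
          _ ≤ ψ η := hg
      linarith
    have : Tendsto (fun η : ℝ => C₀ * η ^ (p - 1)) atTop atTop :=
      (tendsto_rpow_atTop (by linarith : 0 < p - 1)).const_mul_atTop hC₀
    exact tendsto_atTop_mono' _ hbound this
  -- F tends to atTop
  have hFtop : Tendsto F atTop atTop := by
    have hbound : ∀ᶠ η in atTop, deriv ψ η - ψ 1 ≤ F η := by
      filter_upwards [eventually_ge_atTop (2:ℝ)] with η hη
      have ht := htang η 1 (by intro h; rw [h] at hη; linarith)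
      simp only [hF]; nlinarith
    exact tendsto_atTop_mono' _ hbound
      (tendsto_atTop_add_const_right _ (-ψ 1) hdtop)
  -- F is even
  have hFeven : ∀ η : ℝ, F (-η) = F η := by
    intro η; simp only [hF, hodd, heven]; ring
  have hFbot : Tendsto F atBot atTop := by
    have : Tendsto (fun η : ℝ => F (-η)) atBot atTop :=
      hFtop.comp tendsto_neg_atBot_atTop
    simpa only [hFeven] using this
  refine ⟨hmono, hanti, hFtop, hFbot, ?_⟩
  -- the unique-roots part
  have hdbot : Tendsto (deriv ψ) atBot atBot := by
    have : Tendsto (fun η : ℝ => -deriv ψ (-η)) atBot atBot :=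
      tendsto_neg_atTop_atBot.comp (hdtop.comp tendsto_neg_atBot_atTop)
    simpa only [hodd, neg_neg] using this
  have hsurj : Function.Surjective (deriv ψ) := hdc.surjective hdtop hdbot
  have hri : ∀ z : ℝ, deriv ψ (Function.invFun (deriv ψ) z) = z :=
    fun z => Function.invFun_eq (hsurj z)
  have hli : ∀ a : ℝ, Function.invFun (deriv ψ) (deriv ψ a) = a :=
    Function.leftInverse_invFun hsm.injective
  have hFc : Continuous F := (hdc.mul continuous_id).sub hC1.continuous
  intro α _ hsin
  set c : ℝ := 1 - Real.sin α with hc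
  have hcpos : 0 < c := by simp [hc]; linarith
  -- find η > 0 with F η = c
  obtain ⟨b, hb1, hb0⟩ := ((hFtop.eventually_ge_atTop c).and (eventually_ge_atTop 0)).exists
  have hF0 : F 0 = 0 := by simp [hF, h0]
  obtain ⟨η, hηmem, hηeq⟩ := intermediate_value_Icc hb0 hFc.continuousOn
    (by rw [hF0]; exact ⟨hcpos.le, hb1⟩)
  have hηpos : 0 < η := by
    rcases eq_or_lt_of_le hηmem.1 with h | h
    · exfalso; rw [← h] at hηeq; rw [hF0] at hηeq; linarith
    · exact h
  -- rewrite the equation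
  have heq : ∀ z : ℝ,
      (Real.cos (π/2 - α) + z * Function.invFun (deriv ψ) z
        - 1 - ψ (Function.invFun (deriv ψ) z) = 0) ↔
      F (Function.invFun (deriv ψ) z) = c := by
    intro z
    rw [Real.cos_pi_div_two_sub]
    have hz : z * Function.invFun (deriv ψ) z
        = deriv ψ (Function.invFun (deriv ψ) z) * Function.invFun (deriv ψ) z := by
      rw [hri]
    rw [hz]
    simp only [hF, hc]
    constructor <;> intro h <;> linarith
  constructor
  · -- positive root
    refine ⟨deriv ψ η, ⟨?_, ?_⟩, ?_⟩
    · rw [← hd0]; exact hsm hηpos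
    · rw [heq, hli]; exact hηeq
    · rintro z ⟨hz, hzeq⟩
      rw [heq] at hzeq
      have hφpos : 0 < Function.invFun (deriv ψ) z := by
        have : deriv ψ 0 < deriv ψ (Function.invFun (deriv ψ) z) := by
          rw [hd0, hri]; exact hz
        exact hsm.lt_iff_lt.1 this
      have := hmono.injOn hφpos.le hηpos.le (hzeq.trans hηeq.symm)
      rw [← hri z, this]
  · -- negative root
    refine ⟨deriv ψ (-η), ⟨?_, ?_⟩, ?_⟩
    · rw [← hd0]; exact hsm (by linarith)
    · rw [heq, hli, hFeven]; exact hηeq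
    · rintro z ⟨hz, hzeq⟩
      rw [heq] at hzeq
      have hφneg : Function.invFun (deriv ψ) z < 0 := by
        have : deriv ψ (Function.invFun (deriv ψ) z) < deriv ψ 0 := by
          rw [hd0, hri]; exact hz
        exact hsm.lt_iff_lt.1 this
      have hFη : F (-η) = c := by rw [hFeven]; exact hηeq
      have := hanti.injOn hφneg.le (by linarith : -η ≤ (0:ℝ))
        (hzeq.trans hFη.symm)
      rw [← hri z, this]
end

section
/- Let a ≥ 0 and b > 0 and consider the real 4×4 matrix J with rows (0,1,0,0), (0,0,0,1/b), (1,0,0,0), (0,a,−1,0) (the linearization matrix of the asymptotic adjoint system with b = ψ''(0) and a = φ''(0)). Then no eigenvalue of J is purely imaginary or zero, and J has exactly two eigenvalues (counted with algebraic multiplicity, as roots of its characteristic polynomial in ℂ) with strictly negative real part and exactly two with strictly positive real part. -/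
open Matrix Complex Polynomial

theorem charpoly_eq_aux (a b : ℝ) :
  (( !![0,1,0,0;0,0,0,1/b;1,0,0,0;0,a,-1,0] : Matrix (Fin 4) (Fin 4) ℝ).map (algebraMap ℝ ℂ)).charpoly
  = X^4 - C ((a:ℂ)/(b:ℂ)) * X^2 + C (1/(b:ℂ)) := by
  rw [Matrix.charpoly]
  have h : charmatrix (( !![0,1,0,0;0,0,0,1/b;1,0,0,0;0,a,-1,0] : Matrix (Fin 4) (Fin 4) ℝ).map (algebraMap ℝ ℂ))
      = !![X, -1, 0, 0; 0, X, 0, -C (1/(b:ℂ)); -1, 0, X, 0; 0, -C (a:ℂ), 1, X] := by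
    ext i j
    fin_cases i <;> fin_cases j <;>
      simp [charmatrix_apply, Matrix.map_apply, Matrix.diagonal_apply, Complex.ofReal_div, Matrix.vecHead, Matrix.vecTail]
  rw [h]
  simp [Matrix.det_succ_row_zero, Fin.sum_univ_succ, Fin.succAbove, _root_.map_mul]
  rw [div_eq_mul_inv, C_mul]; ring

theorem quartic_roots_aux (A B u v : ℂ) (hu : u^2 + v^2 = A) (hv : u^2 * v^2 = B) :
    (X^4 - C A * X^2 + C B : Polynomial ℂ).roots = {u, -u, v, -v} := by
  have hfac : (X^4 - C A * X^2 + C B : Polynomial ℂ)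
      = (X - C u) * (X - C (-u)) * ((X - C v) * (X - C (-v))) := by
    rw [← hu, ← hv]
    simp only [C_neg, C_add, C_mul, C_pow]
    ring
  rw [hfac, Polynomial.roots_mul (mul_ne_zero (mul_ne_zero (X_sub_C_ne_zero u) (X_sub_C_ne_zero (-u))) (mul_ne_zero (X_sub_C_ne_zero v) (X_sub_C_ne_zero (-v)))),
    Polynomial.roots_mul (mul_ne_zero (X_sub_C_ne_zero u) (X_sub_C_ne_zero (-u))),
    Polynomial.roots_mul (mul_ne_zero (X_sub_C_ne_zero v) (X_sub_C_ne_zero (-v))),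
    roots_X_sub_C, roots_X_sub_C, roots_X_sub_C, roots_X_sub_C]
  rfl


/-- the linearization matrix `J` of the asymptotic adjoint
system (with `b = ψ''(0) > 0`, `a = φ''(0) ≥ 0`) is hyperbolic: no eigenvalue
is purely imaginary or zero, and exactly two eigenvalues (with algebraic
multiplicity, as roots of the characteristic polynomial over `ℂ`) have
negative real part and exactly two have positive real part. -/
theorem linearization_hyperbolic_two_stable_two_unstable
    (a b : ℝ) (ha : 0 ≤ a) (hb : 0 < b) :
    ∀ J : Matrix (Fin 4) (Fin 4) ℝ,
      J = !![0, 1, 0, 0; 0, 0, 0, 1/b; 1, 0, 0, 0; 0, a, -1, 0] →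
      ∀ evs : Multiset ℂ,
        evs = ((J.map (algebraMap ℝ ℂ)).charpoly).roots →
        (∀ z ∈ evs, z.re ≠ 0) ∧
        (evs.filter (fun z => z.re < 0)).card = 2 ∧
        (evs.filter (fun z => 0 < z.re)).card = 2 := by
  intro J hJ evs hevs
  subst hJ
  set A : ℂ := (a:ℂ)/(b:ℂ) with hA
  set B : ℂ := 1/(b:ℂ) with hB
  -- square roots
  obtain ⟨s, hs⟩ := IsAlgClosed.exists_pow_nat_eq (k := ℂ) (A^2 - 4*B) (n := 2) (by norm_num)
  obtain ⟨u, hu⟩ := IsAlgClosed.exists_pow_nat_eq (k := ℂ) ((A+s)/2) (n := 2) (by norm_num)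
  obtain ⟨v, hv⟩ := IsAlgClosed.exists_pow_nat_eq (k := ℂ) ((A-s)/2) (n := 2) (by norm_num)
  have hsum : u^2 + v^2 = A := by rw [hu, hv]; ring
  have hprod : u^2 * v^2 = B := by rw [hu, hv]; linear_combination (-(1:ℂ)/4) * hs
  have hevs' : evs = {u, -u, v, -v} := by
    rw [hevs, charpoly_eq_aux, quartic_roots_aux A B u v hsum hprod]
  -- real part facts
  have hAre : A.re = a/b := by rw [hA, ← Complex.ofReal_div]; simp
  have hAim : A.im = 0 := by rw [hA, ← Complex.ofReal_div]; simp
  have hBre : B.re = 1/b := by rw [hB, ← Complex.ofReal_one, ← Complex.ofReal_div]; simp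
  have hBim : B.im = 0 := by rw [hB, ← Complex.ofReal_one, ← Complex.ofReal_div]; simp
  have hab : 0 ≤ a/b := div_nonneg ha hb.le
  have hbpos : 0 < 1/b := by positivity
  -- key: any w with w^2 + w'^2-type decomposition has nonzero real part
  have key : ∀ w w' : ℂ, w^2 + w'^2 = A → w^2 * w'^2 = B → w.re ≠ 0 := by
    intro w w' hsum' hprod' hre
    set t := w^2 with ht
    set t' := w'^2 with ht'
    have htre : t.re = w.re*w.re - w.im*w.im := by rw [ht, pow_two, Complex.mul_re]
    have htim : t.im = w.re*w.im + w.im*w.re := by rw [ht, pow_two, Complex.mul_im]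
    have htre' : t.re ≤ 0 := by rw [htre, hre]; nlinarith [sq_nonneg w.im]
    have htim0 : t.im = 0 := by rw [htim, hre]; ring
    have h1 : t.re + t'.re = a/b := by
      have := congrArg Complex.re hsum'; simpa [Complex.add_re, hAre] using this
    have h2 : t.im + t'.im = 0 := by
      have := congrArg Complex.im hsum'; simpa [Complex.add_im, hAim] using this
    have htim0' : t'.im = 0 := by linarith
    have h3 : t.re * t'.re = 1/b := by
      have := congrArg Complex.re hprod'
      rw [Complex.mul_re, htim0, htim0', hBre] at this
      linarith [this]
    have ht'nn : 0 ≤ t'.re := by linarith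
    nlinarith [mul_nonneg (neg_nonneg.mpr htre') ht'nn]
  have hure : u.re ≠ 0 := key u v hsum hprod
  have hvre : v.re ≠ 0 := key v u (by rw [← hsum]; ring) (by rw [← hprod]; ring)
  subst hevs'
  refine ⟨?_, ?_, ?_⟩
  · intro z hz
    simp only [Multiset.insert_eq_cons, Multiset.mem_cons, Multiset.mem_singleton] at hz
    rcases hz with rfl | rfl | rfl | rfl
    · exact hure
    · simpa using hure
    · exact hvre
    · simpa using hvre
  · rcases hure.lt_or_gt with h | h <;> rcases hvre.lt_or_gt with h' | h' <;>
      simp [Multiset.insert_eq_cons, Multiset.filter_cons, Multiset.filter_singleton,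
        Complex.neg_re, h, h', not_lt.mpr h.le, not_lt.mpr h'.le, asymm h, asymm h',
        neg_pos, neg_neg_iff_pos, not_lt]
  · rcases hure.lt_or_gt with h | h <;> rcases hvre.lt_or_gt with h' | h' <;>
      simp [Multiset.insert_eq_cons, Multiset.filter_cons, Multiset.filter_singleton,
        Complex.neg_re, h, h', not_lt.mpr h.le, not_lt.mpr h'.le, asymm h, asymm h',
        neg_pos, neg_neg_iff_pos, not_lt]
end
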